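/- arXiv:2507.12047 — 4 statements merged into one kernel-verified Lean document; each statement's English description precedes it below -/
import Mathlib

section
/- Let (G, f) be a self-deleting graph and let P = (v₁, e₁, …, e_{k−1}, v_k) be a shortest f-conforming v₁-v_k path. Let G_P be the subgraph of G induced by the vertices of P, and suppose |f(v)| ≤ μ for all v. Then G_P has at most kμ + k − 1 edges. -/
open SimpleGraph

/-- A walk `(v₁, e₁, …, e_{k-1}, v_k)` in a self-deleting graph `(G, f)` is
`f`-conforming if `eᵢ ∉ f(vⱼ)` whenever `j ≤ i` (1-based; here 0-based indices). -/
def Conforming {V : Type*} {G : SimpleGraph V} (f : V → Set (Sym2 V))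
    {u v : V} (p : G.Walk u v) : Prop :=
  ∀ (i j : ℕ) (hi : i < p.edges.length) (hj : j < p.support.length),
    j ≤ i → p.edges.get ⟨i, hi⟩ ∉ f (p.support.get ⟨j, hj⟩)

private lemma edge_getElem {V : Type*} {G : SimpleGraph V} {u v : V} (p : G.Walk u v)
    (i : ℕ) (hie : i < p.edges.length) :
    p.edges[i] =
      s(p.support[i]'(by rw [Walk.length_support]; rw [Walk.length_edges] at hie; omega),
        p.support[i+1]'(by rw [Walk.length_support]; rw [Walk.length_edges] at hie; omega)) := by
  have hd : i < p.darts.length := by rw [Walk.length_darts, ← Walk.length_edges]; exact hie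
  have hfst : (p.darts[i]).fst = p.support[i]'(by
      rw [Walk.length_support]; rw [Walk.length_edges] at hie; omega) := by
    have h1 : (p.darts.map (fun d => d.fst))[i]'(by simpa using hd) = p.darts[i].fst :=
      List.getElem_map _
    rw [← h1, List.getElem_of_eq p.map_fst_darts, List.getElem_dropLast]
  have hsnd : (p.darts[i]).snd = p.support[i+1]'(by
      rw [Walk.length_support]; rw [Walk.length_edges] at hie; omega) := by
    have h1 : (p.darts.map (fun d => d.snd))[i]'(by simpa using hd) = p.darts[i].snd :=
      List.getElem_map _
    rw [← h1, List.getElem_of_eq p.map_snd_darts, List.getElem_tail]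
  have he : p.edges[i] = (p.darts[i]).edge := by
    show (p.darts.map SimpleGraph.Dart.edge)[i]'_ = _
    exact List.getElem_map _
  rw [he, ← hfst, ← hsnd]
  rfl

private lemma gidx {α : Type*} (l : List α) {i j : ℕ} (h : i = j) (hi : i < l.length) :
    l[i] = l[j]'(h ▸ hi) := by subst h; rfl

private lemma ncard_biUnion_list_le {α β : Type*} (l : List α) (g : α → Set β) (μ : ℕ)
    (h : ∀ x, (g x).ncard ≤ μ) : (⋃ x ∈ l, g x).ncard ≤ l.length * μ := by
  induction l with
  | nil => simp
  | cons a l ih =>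
    have heq : (⋃ x ∈ (a :: l), g x) = g a ∪ ⋃ x ∈ l, g x := by
      simp [Set.biUnion_insert]
    rw [heq]
    calc (g a ∪ ⋃ x ∈ l, g x).ncard ≤ (g a).ncard + (⋃ x ∈ l, g x).ncard :=
          Set.ncard_union_le _ _
      _ ≤ μ + l.length * μ := Nat.add_le_add (h a) ih
      _ = (a :: l).length * μ := by rw [List.length_cons, Nat.succ_mul, Nat.add_comm]

private lemma key_lemma {V : Type*} {G : SimpleGraph V} (f : V → Set (Sym2 V)) {s t : V}
    (P : G.Walk s t) (hP : P.IsPath) (hc : Conforming f P)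
    (hmin : ∀ Q : G.Walk s t, Q.IsPath → Conforming f Q →
      P.support.length ≤ Q.support.length)
    {a b : V} (hab : G.Adj a b) {i j : ℕ}
    (hi : i < P.support.length) (hj : j < P.support.length)
    (hLa : P.support[i] = a) (hLb : P.support[j] = b) (hij : i < j) :
    s(a, b) ∈ P.edges ∨ ∃ v ∈ P.support, s(a, b) ∈ f v := by
  classical
  have hnd : P.support.Nodup := hP.support_nodup
  have hk : P.support.length = P.length + 1 := Walk.length_support P
  have hE : P.edges.length = P.length := Walk.length_edges P
  by_cases hj1 : i + 1 = j
  · -- path edge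
    subst hj1
    left
    have hie : i < P.edges.length := by omega
    have h := edge_getElem P i hie
    have hmem : P.edges[i]'hie ∈ P.edges := List.getElem_mem _
    rw [h, hLa, hLb] at hmem
    exact hmem
  · have hj2 : i + 1 < j := by omega
    right
    by_contra hcon
    push_neg at hcon
    have ha : a ∈ P.support := hLa ▸ List.getElem_mem _
    have hb : b ∈ P.support := hLb ▸ List.getElem_mem _
    -- takeUntil at a
    set T := P.takeUntil a ha with hT
    have hspecA := P.take_spec ha
    have hTpre : T.support <+: P.support :=
      ⟨(P.dropUntil a ha).support.tail, by rw [← Walk.support_append, hspecA]⟩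
    have hTne : T.support ≠ [] := T.support_ne_nil
    have hTpos : 0 < T.support.length := List.length_pos_iff.mpr hTne
    have hTlen1 : T.support.length = i + 1 := by
      have hlt : T.support.length - 1 < T.support.length := by omega
      have h1 : T.support[T.support.length - 1]'hlt = a := by
        rw [← List.getLast_eq_getElem]; exact Walk.getLast_support T
      have h2 : P.support[T.support.length - 1]'(by
          have := hTpre.length_le; omega) = a := by
        rw [← hTpre.getElem hlt]; exact h1
      have h3 : T.support.length - 1 = i :=
        hnd.getElem_inj_iff.mp (h2.trans hLa.symm)
      omega
    have hTs : T.support = P.support.take (i + 1) := by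
      have := List.prefix_iff_eq_take.mp hTpre
      rwa [hTlen1] at this
    have hTe : T.edges = P.edges.take i := by
      have hEsplit : P.edges = T.edges ++ (P.dropUntil a ha).edges := by
        rw [← Walk.edges_append, hspecA]
      have hTelen : T.edges.length = i := by
        rw [Walk.length_edges]
        have := Walk.length_support T; omega
      rw [hEsplit, List.take_left' hTelen]
    -- takeUntil/dropUntil at b
    set TB := P.takeUntil b hb with hTB
    set D := P.dropUntil b hb with hD
    have hspecB := P.take_spec hb
    have hBpre : TB.support <+: P.support :=
      ⟨D.support.tail, by rw [← Walk.support_append, hspecB]⟩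
    have hBne : TB.support ≠ [] := TB.support_ne_nil
    have hBpos : 0 < TB.support.length := List.length_pos_iff.mpr hBne
    have hBlen1 : TB.support.length = j + 1 := by
      have hlt : TB.support.length - 1 < TB.support.length := by omega
      have h1 : TB.support[TB.support.length - 1]'hlt = b := by
        rw [← List.getLast_eq_getElem]; exact Walk.getLast_support TB
      have h2 : P.support[TB.support.length - 1]'(by
          have := hBpre.length_le; omega) = b := by
        rw [← hBpre.getElem hlt]; exact h1
      have h3 : TB.support.length - 1 = j :=
        hnd.getElem_inj_iff.mp (h2.trans hLb.symm)
      omega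
    have h5 : P.support = TB.support ++ D.support.tail := by
      rw [← Walk.support_append, hspecB]
    have h6 : D.support.tail = P.support.drop (j + 1) := by
      conv_rhs => rw [h5]
      rw [List.drop_left' hBlen1]
    have hDs : D.support = P.support.drop j := by
      rw [Walk.support_eq_cons D, h6, ← hLb, ← List.drop_eq_getElem_cons hj]
    have hDe : D.edges = P.edges.drop j := by
      have hEsplitB : P.edges = TB.edges ++ D.edges := by
        rw [← Walk.edges_append, hspecB]
      have hBelen : TB.edges.length = j := by
        rw [Walk.length_edges]
        have := Walk.length_support TB; omega
      rw [hEsplitB, List.drop_left' hBelen]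
    -- the shortcut walk
    set Q : G.Walk s t := T.append (Walk.cons hab D) with hQ
    have hQs : Q.support = P.support.take (i + 1) ++ P.support.drop j := by
      rw [hQ, Walk.support_append, Walk.support_cons, List.tail_cons, hTs, hDs]
    have hQe : Q.edges = P.edges.take i ++ s(a, b) :: P.edges.drop j := by
      rw [hQ, Walk.edges_append, Walk.edges_cons, hTe, hDe]
    have hia : i + 1 ≤ P.support.length := by omega
    have hLtk : (P.support.take (i + 1)).length = i + 1 := by
      rw [List.length_take]; omega
    have hEtk : (P.edges.take i).length = i := by
      rw [List.length_take]; omega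
    have hQslen : Q.support.length = (i + 1) + (P.support.length - j) := by
      rw [hQs, List.length_append, hLtk, List.length_drop]
    have hQelen : Q.edges.length = (i + 1) + (P.edges.length - j) := by
      rw [hQe, List.length_append, hEtk, List.length_cons, List.length_drop]
      omega
    have hQpath : Q.IsPath := by
      rw [Walk.isPath_def, hQs]
      have h8 : List.Sublist (P.support.take (i + 1)) (P.support.take j) := by
        have h9 : (P.support.take j).take (i + 1) = P.support.take (i + 1) := by
          rw [List.take_take]; congr 1; omega
        rw [← h9]; exact List.take_sublist _ _
      have h10 : List.Sublist (P.support.take (i + 1) ++ P.support.drop j) P.support := by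
        conv_rhs => rw [← List.take_append_drop j P.support]
        exact h8.append (List.Sublist.refl _)
      exact h10.nodup hnd
    -- index computations
    -- index computations
    have haux1 : ∀ (q : ℕ) (hq1 : q < i + 1) (hq : q < Q.support.length),
        Q.support[q] = P.support[q]'(by omega) := by
      intro q hq1 hq
      rw [List.getElem_of_eq hQs, List.getElem_append_left (by rw [hLtk]; omega),
        List.getElem_take]
    have haux2 : ∀ (q : ℕ) (hq1 : i + 1 ≤ q) (hq : q < Q.support.length),
        Q.support[q] = P.support[j + (q - i - 1)]'(by rw [hQslen] at hq; omega) := by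
      intro q hq1 hq
      have hq' : q < (i + 1) + (P.support.length - j) := by rwa [hQslen] at hq
      have hql : q < (P.support.take (i+1) ++ P.support.drop j).length := by
        rw [← hQs]; exact hq
      have s1 : Q.support[q] = (P.support.take (i+1) ++ P.support.drop j)[q] :=
        List.getElem_of_eq hQs hq
      have s2 : (P.support.take (i+1) ++ P.support.drop j)[q]
          = (P.support.drop j)[q - (P.support.take (i+1)).length]'(by
              rw [List.length_drop, hLtk]; rw [List.length_append, hLtk, List.length_drop] at hql
              omega) :=
        List.getElem_append_right (by rw [hLtk]; omega)
      have s3 : (P.support.drop j)[q - (P.support.take (i+1)).length]'(by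
              rw [List.length_drop, hLtk]; rw [List.length_append, hLtk, List.length_drop] at hql
              omega)
          = (P.support.drop j)[q - (i+1)]'(by rw [List.length_drop]; omega) :=
        gidx _ (by rw [hLtk]) _
      have s4 : (P.support.drop j)[q - (i+1)]'(by rw [List.length_drop]; omega)
          = P.support[j + (q - (i+1))]'(by omega) :=
        (List.getElem_drop' (xs := P.support) (i := j) (j := q - (i+1)) (by omega)).symm
      have s5 : P.support[j + (q - (i+1))]'(by omega)
          = P.support[j + (q - i - 1)]'(by omega) :=
        gidx _ (by omega) _
      exact s1.trans (s2.trans (s3.trans (s4.trans s5)))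
    have hedge1 : ∀ (p : ℕ) (hp1 : p < i) (hp : p < Q.edges.length),
        Q.edges[p] = P.edges[p]'(by omega) := by
      intro p hp1 hp
      rw [List.getElem_of_eq hQe, List.getElem_append_left (by rw [hEtk]; omega),
        List.getElem_take]
    have hedge2 : ∀ (hp : i < Q.edges.length), Q.edges[i] = s(a, b) := by
      intro hp
      have hql : i < (P.edges.take i ++ s(a,b) :: P.edges.drop j).length := by
        rw [← hQe]; exact hp
      have s1 : Q.edges[i] = (P.edges.take i ++ s(a,b) :: P.edges.drop j)[i] :=
        List.getElem_of_eq hQe hp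
      have s2 : (P.edges.take i ++ s(a,b) :: P.edges.drop j)[i]
          = (s(a,b) :: P.edges.drop j)[i - (P.edges.take i).length]'(by
              rw [List.length_cons, hEtk]; omega) :=
        List.getElem_append_right (by rw [hEtk])
      have s3 : (s(a,b) :: P.edges.drop j)[i - (P.edges.take i).length]'(by
              rw [List.length_cons, hEtk]; omega)
          = (s(a,b) :: P.edges.drop j)[0]'(by rw [List.length_cons]; omega) :=
        gidx _ (by rw [hEtk]; omega) _
      exact s1.trans (s2.trans s3)
    have hedge3 : ∀ (p : ℕ) (hp1 : i < p) (hp : p < Q.edges.length),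
        Q.edges[p] = P.edges[j + (p - i - 1)]'(by rw [hQelen] at hp; omega) := by
      intro p hp1 hp
      have hp' : p < (i + 1) + (P.edges.length - j) := by rwa [hQelen] at hp
      have hql : p < (P.edges.take i ++ s(a,b) :: P.edges.drop j).length := by
        rw [← hQe]; exact hp
      have s1 : Q.edges[p] = (P.edges.take i ++ s(a,b) :: P.edges.drop j)[p] :=
        List.getElem_of_eq hQe hp
      have s2 : (P.edges.take i ++ s(a,b) :: P.edges.drop j)[p]
          = (s(a,b) :: P.edges.drop j)[p - (P.edges.take i).length]'(by
              rw [List.length_cons, List.length_drop, hEtk]; omega) :=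
        List.getElem_append_right (by rw [hEtk]; omega)
      have s3 : (s(a,b) :: P.edges.drop j)[p - (P.edges.take i).length]'(by
              rw [List.length_cons, List.length_drop, hEtk]; omega)
          = (s(a,b) :: P.edges.drop j)[(p - i - 1) + 1]'(by
              rw [List.length_cons, List.length_drop]; omega) :=
        gidx _ (by rw [hEtk]; omega) _
      have s4 : (s(a,b) :: P.edges.drop j)[(p - i - 1) + 1]'(by
              rw [List.length_cons, List.length_drop]; omega)
          = (P.edges.drop j)[p - i - 1]'(by rw [List.length_drop]; omega) :=
        List.getElem_cons_succ _ _ _ _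
      have s5 : (P.edges.drop j)[p - i - 1]'(by rw [List.length_drop]; omega)
          = P.edges[j + (p - i - 1)]'(by omega) :=
        (List.getElem_drop' (xs := P.edges) (i := j) (j := p - i - 1) (by omega)).symm
      exact s1.trans (s2.trans (s3.trans (s4.trans s5)))
    -- Q is conforming
    have hQconf : Conforming f Q := by
      intro p q hpQ hqQ hpq
      simp only [List.get_eq_getElem]
      have hp' : p < (i + 1) + (P.edges.length - j) := by rwa [hQelen] at hpQ
      have hq' : q < (i + 1) + (P.support.length - j) := by rwa [hQslen] at hqQ
      rcases Nat.lt_or_ge q (i + 1) with hqi | hqi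
      · rw [haux1 q hqi hqQ]
        rcases Nat.lt_trichotomy p i with hpi | hpi | hpi
        · rw [hedge1 p hpi hpQ]
          have := hc p q (by omega) (by omega) hpq
          simpa using this
        · subst hpi
          rw [hedge2 hpQ]
          exact hcon _ (List.getElem_mem _)
        · rw [hedge3 p hpi hpQ]
          have := hc (j + (p - i - 1)) q (by omega) (by omega) (by omega)
          simpa using this
      · have hpi : i < p := by omega
        rw [haux2 q hqi hqQ, hedge3 p hpi hpQ]
        have := hc (j + (p - i - 1)) (j + (q - i - 1)) (by omega) (by omega) (by omega)
        simpa using this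
    have hlen := hmin Q hQpath hQconf
    rw [hQslen] at hlen
    omega

/-- If `P` is a shortest `f`-conforming path on `k` vertices and `|f(v)| ≤ μ` for
all `v`, then the subgraph of `G` induced by the vertices of `P` has at most
`kμ + k - 1` edges. -/
theorem stmt8 {V : Type*} [Fintype V] (G : SimpleGraph V) (f : V → Set (Sym2 V))
    (μ : ℕ) (hμ : ∀ v : V, (f v).ncard ≤ μ) {s t : V}
    (P : G.Walk s t) (hP : P.IsPath) (hc : Conforming f P)
    (hmin : ∀ Q : G.Walk s t, Q.IsPath → Conforming f Q →
      P.support.length ≤ Q.support.length) :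
    {e : Sym2 V | e ∈ G.edgeSet ∧ ∀ x ∈ e, x ∈ P.support}.ncard ≤
      P.support.length * μ + P.support.length - 1 := by
  classical
  have hsub : {e : Sym2 V | e ∈ G.edgeSet ∧ ∀ x ∈ e, x ∈ P.support} ⊆
      (↑P.edges.toFinset : Set (Sym2 V)) ∪ ⋃ v ∈ P.support, f v := by
    rintro e ⟨heG, hev⟩
    revert heG hev
    induction e using Sym2.ind with
    | _ a b =>
      intro heG hev
      have hab : G.Adj a b := heG
      have ha : a ∈ P.support := hev a (Sym2.mem_mk_left a b)
      have hb : b ∈ P.support := hev b (Sym2.mem_mk_right a b)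
      obtain ⟨i, hi, hLa⟩ := List.mem_iff_getElem.mp ha
      obtain ⟨jj, hj, hLb⟩ := List.mem_iff_getElem.mp hb
      have hne : i ≠ jj := by
        rintro rfl
        exact hab.ne (hLa ▸ hLb ▸ rfl)
      rcases hne.lt_or_gt with h | h
      · rcases key_lemma f P hP hc hmin hab hi hj hLa hLb h with h1 | ⟨v, hv, hfv⟩
        · left; simpa using h1
        · right; exact Set.mem_biUnion hv hfv
      · rcases key_lemma f P hP hc hmin hab.symm hj hi hLb hLa h with h1 | ⟨v, hv, hfv⟩
        · left; simp only [Finset.coe_sort_coe, Set.mem_setOf_eq, List.coe_toFinset,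
            Set.mem_setOf_eq]
          rw [Sym2.eq_swap]
          exact h1
        · right
          rw [Sym2.eq_swap]
          exact Set.mem_biUnion hv hfv
  have hfin : ((↑P.edges.toFinset : Set (Sym2 V)) ∪ ⋃ v ∈ P.support, f v).Finite :=
    Set.toFinite _
  have h1 : {e : Sym2 V | e ∈ G.edgeSet ∧ ∀ x ∈ e, x ∈ P.support}.ncard ≤
      ((↑P.edges.toFinset : Set (Sym2 V)) ∪ ⋃ v ∈ P.support, f v).ncard :=
    Set.ncard_le_ncard hsub hfin
  have h2 : ((↑P.edges.toFinset : Set (Sym2 V)) ∪ ⋃ v ∈ P.support, f v).ncard ≤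
      (↑P.edges.toFinset : Set (Sym2 V)).ncard + (⋃ v ∈ P.support, f v).ncard :=
    Set.ncard_union_le _ _
  have h3 : (↑P.edges.toFinset : Set (Sym2 V)).ncard ≤ P.length := by
    rw [Set.ncard_coe_finset]
    calc P.edges.toFinset.card ≤ P.edges.length := P.edges.toFinset_card_le
      _ = P.length := Walk.length_edges P
  have h4 : (⋃ v ∈ P.support, f v).ncard ≤ P.support.length * μ :=
    ncard_biUnion_list_le P.support f μ hμ
  have hk : P.support.length = P.length + 1 := Walk.length_support P
  have hmono : P.support.length * μ ≤ P.support.length * μ := le_refl _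
  omega
end

section
/- Let (G, f) be a self-deleting graph in which every edge of every deletion set is incident to the vertex deleting it (i.e., for all v and all e ∈ f(v), v ∈ e). Define a directed graph D on V(G) with an arc (u, v) whenever {u, v} ∈ E(G) and {u, v} ∉ f(v). Then for any s, t ∈ V(G): there is an f-conforming s-t path in (G, f) if and only if there is a directed s-t path in D. -/
lemma darts_getElem {V : Type*} {G : SimpleGraph V} :
    ∀ {u v : V} (p : G.Walk u v) (i : ℕ) (h : i < p.darts.length)
      (h1 : i < p.support.length) (h2 : i + 1 < p.support.length),
      p.darts[i].fst = p.support[i] ∧ p.darts[i].snd = p.support[i+1] := by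
  intro u v p
  induction p with
  | nil => simp
  | @cons a b c h q ih =>
    intro i hi h1 h2
    cases i with
    | zero =>
      refine ⟨rfl, ?_⟩
      show _ = q.support[0]
      obtain ⟨l, hl⟩ : ∃ l, q.support = b :: l := ⟨_, q.support_eq_cons⟩
      simp [hl]
    | succ n =>
      simp only [SimpleGraph.Walk.darts_cons, SimpleGraph.Walk.support_cons,
        List.getElem_cons_succ]
      exact ih n (by simpa using hi) (by simpa using h1) (by simpa using h2)

lemma walk_rtg {V : Type*} {G : SimpleGraph V} {R : V → V → Prop} :
    ∀ {u v : V} (p : G.Walk u v), (∀ d ∈ p.darts, R d.fst d.snd) →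
      Relation.ReflTransGen R u v := by
  intro u v p
  induction p with
  | nil => intro; exact .refl
  | cons h q ih =>
    intro hd
    refine .head (hd ⟨(_, _), h⟩ List.mem_cons_self) (ih fun d hdd => hd d ?_)
    simp [hdd]

/-- If every vertex deletes only edges incident to it, then `f`-conforming `s`-`t`
paths exist iff `t` is reachable from `s` in the digraph with arcs `(u, v)` for
`{u,v} ∈ E(G)` with `{u,v} ∉ f(u)`. -/
theorem stmt13 {V : Type*} (G : SimpleGraph V) (f : V → Set (Sym2 V))
    (hinc : ∀ v : V, ∀ e ∈ f v, v ∈ e) (s t : V) :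
    (∃ p : G.Walk s t, p.IsPath ∧ Conforming f p) ↔
      Relation.ReflTransGen (fun u v => G.Adj u v ∧ s(u, v) ∉ f u) s t := by
  classical
  constructor
  · rintro ⟨p, _, hc⟩
    apply walk_rtg p
    intro d hd
    obtain ⟨i, hi, rfl⟩ := List.getElem_of_mem hd
    have hlen : p.darts.length = p.edges.length := by simp [SimpleGraph.Walk.edges]
    have hi' : i < p.edges.length := hlen ▸ hi
    have hjs : i < p.support.length := by
      have h1 := p.length_support; have h2 := p.length_edges; omega
    have hds := p.length_darts
    have hfst := (darts_getElem p i hi (by have h1 := p.length_support; omega)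
      (by have h1 := p.length_support; omega)).1
    have hedge : p.edges.get ⟨i, hi'⟩ = p.darts[i].edge := by
      simp [SimpleGraph.Walk.edges]
    refine ⟨p.darts[i].adj, ?_⟩
    have hcc := hc i i hi' hjs le_rfl
    rw [hedge] at hcc
    have : p.support.get ⟨i, hjs⟩ = p.darts[i].fst := by
      simp [hfst]
    rw [this] at hcc
    simpa [SimpleGraph.Dart.edge] using hcc
  · intro hr
    have : ∃ p : G.Walk s t, ∀ d ∈ p.darts, G.Adj d.fst d.snd ∧ s(d.fst, d.snd) ∉ f d.fst := by
      induction hr with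
      | refl => exact ⟨.nil, by simp⟩
      | tail h₁ h₂ ih =>
        obtain ⟨p, hp⟩ := ih
        refine ⟨p.concat h₂.1, ?_⟩
        intro d hd
        rw [SimpleGraph.Walk.darts_concat, List.concat_eq_append] at hd
        rcases List.mem_append.mp hd with hd | hd
        · exact hp d hd
        · have : d = SimpleGraph.Dart.mk (_, _) h₂.1 := by simpa using hd
          subst this; exact ⟨h₂.1, h₂.2⟩
    obtain ⟨p, hp⟩ := this
    refine ⟨p.bypass, p.bypass_isPath, ?_⟩
    intro i j hi hj hji hmem
    set q := p.bypass with hq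
    have hdlen : q.darts.length = q.edges.length := by simp [SimpleGraph.Walk.edges]
    have hi'' : i < q.darts.length := hdlen ▸ hi
    have hsl : q.support.length = q.edges.length + 1 := by
      have h1 := q.length_support; have h2 := q.length_edges; omega
    have hds := q.length_darts
    obtain ⟨hfst, hsnd⟩ := darts_getElem q i hi'' (by have h1 := q.length_support; omega)
      (by have h1 := q.length_support; omega)
    have hedge : q.edges.get ⟨i, hi⟩ = q.darts[i].edge := by
      simp [SimpleGraph.Walk.edges]
    have hRd := hp _ (p.darts_bypass_subset (List.getElem_mem hi''))
    have hmem' : q.support.get ⟨j, hj⟩ ∈ q.edges.get ⟨i, hi⟩ := hinc _ _ hmem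
    rw [hedge] at hmem'
    have hnodup : q.support.Nodup := p.bypass_isPath.support_nodup
    rw [SimpleGraph.Dart.edge, Sym2.mem_iff] at hmem'
    have hget : q.support.get ⟨j, hj⟩ = q.support[j] := rfl
    rcases hmem' with h | h
    · have hji' : j = i := by
        rw [hget, hfst] at h
        exact (hnodup.getElem_inj_iff).mp h
      subst hji'
      rw [hedge, hget, ← hfst] at hmem
      exact hRd.2 (by simpa [SimpleGraph.Dart.edge] using hmem)
    · have : j = i + 1 := by
        rw [hget, hsnd] at h
        exact (hnodup.getElem_inj_iff).mp h
      omega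
end

section
/- Let G be an outerplanar graph with a vertex cover S, and let D be the set of vertices outside S having at least 3 neighbors in S (hence degree ≥ 3 in G). Then |D| ≤ 2|S| − 3 (assuming D ∪ S is nonempty with |D ∪ S| ≥ 2). -/
/-- `G` has `H` as a minor: there are nonempty, pairwise disjoint, connected
branch sets in `G`, one for each vertex of `H`, with an edge of `G` between the
branch sets of any two adjacent vertices of `H`. -/
def HasMinor {V W : Type*} (G : SimpleGraph V) (H : SimpleGraph W) : Prop :=
  ∃ φ : W → Set V,
    (∀ w, (φ w).Nonempty) ∧
    (∀ w, (G.induce (φ w)).Connected) ∧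
    (Pairwise fun a b => Disjoint (φ a) (φ b)) ∧
    (∀ a b, H.Adj a b → ∃ x ∈ φ a, ∃ y ∈ φ b, G.Adj x y)

/-- A graph is outerplanar iff it has neither `K₄` nor `K_{2,3}` as a minor. -/
def Outerplanar {V : Type*} (G : SimpleGraph V) : Prop :=
  ¬ HasMinor G (SimpleGraph.completeGraph (Fin 4)) ∧
    ¬ HasMinor G (completeBipartiteGraph (Fin 2) (Fin 3))

def adjPairs {V : Type*} [Fintype V] (G : SimpleGraph V) [DecidableRel G.Adj] : ℕ :=
  (Finset.univ.filter fun p : V × V => G.Adj p.1 p.2).card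

lemma adjPairs_eq_sum {V : Type*} [Fintype V] [DecidableEq V] (G : SimpleGraph V)
    [DecidableRel G.Adj] : adjPairs G = ∑ v, G.degree v := by
  rw [adjPairs, Finset.card_eq_sum_card_fiberwise (f := Prod.fst) (t := Finset.univ)
    (fun p _ => Finset.mem_univ _)]
  refine Finset.sum_congr rfl fun v _ => ?_
  refine Finset.card_bij (fun p _ => p.2) ?_ ?_ ?_
  · intro p hp
    simp only [Finset.mem_filter, Finset.mem_univ, true_and] at hp
    simp only [SimpleGraph.mem_neighborFinset]
    exact hp.2 ▸ hp.1
  · intro p hp q hq h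
    simp only [Finset.mem_filter, Finset.mem_univ, true_and] at hp hq
    exact Prod.ext (hp.2.trans hq.2.symm) h
  · intro w hw
    simp only [SimpleGraph.mem_neighborFinset] at hw
    exact ⟨(v, w), by simp [hw], rfl⟩

lemma even_adjPairs {V : Type*} [Fintype V] [DecidableEq V] (G : SimpleGraph V)
    [DecidableRel G.Adj] : Even (adjPairs G) := by
  rw [adjPairs_eq_sum, SimpleGraph.sum_degrees_eq_twice_card_edges]
  exact even_two_mul _

lemma adjPairs_le {V : Type*} [Fintype V] [DecidableEq V] (G : SimpleGraph V)
    [DecidableRel G.Adj] : adjPairs G ≤ Fintype.card V * Fintype.card V - Fintype.card V := by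
  have : (Finset.univ.filter fun p : V × V => G.Adj p.1 p.2) ⊆ (Finset.univ : Finset V).offDiag := by
    intro p hp
    simp only [Finset.mem_filter] at hp
    simp [Finset.mem_offDiag, hp.2.ne]
  simpa [Finset.offDiag_card, adjPairs] using Finset.card_le_card this

lemma hasMinor_lift {V V' W : Type*} {G : SimpleGraph V} {G' : SimpleGraph V'} {H : SimpleGraph W}
    (f : V → V') (hinj : Function.Injective f)
    (hadj : ∀ a b, G.Adj a b → G'.Adj (f a) (f b)) :
    HasMinor G H → HasMinor G' H := by
  rintro ⟨φ, hne, hconn, hdisj, hedge⟩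
  refine ⟨fun w => f '' φ w, fun w => (hne w).image f, fun w => ?_, ?_, ?_⟩
  · refine (hconn w).map
      (⟨fun a => ⟨f a.1, ⟨a.1, a.2, rfl⟩⟩, fun {a b} h => hadj _ _ h⟩ :
        G.induce (φ w) →g G'.induce (f '' φ w)) ?_
    rintro ⟨y, ⟨x, hx, rfl⟩⟩
    exact ⟨⟨x, hx⟩, rfl⟩
  · intro a b hab
    exact (Set.disjoint_image_iff hinj).2 (hdisj hab)
  · intro a b hab
    obtain ⟨x, hx, y, hy, hxy⟩ := hedge a b hab
    exact ⟨f x, ⟨x, hx, rfl⟩, f y, ⟨y, hy, rfl⟩, hadj _ _ hxy⟩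

lemma induce_support_connected {V : Type*} {G : SimpleGraph V} {x y : V} (w : G.Walk x y) :
    (G.induce {v | v ∈ w.support}).Connected := by
  rw [← SimpleGraph.Walk.verts_toSubgraph]
  have h1 := w.toSubgraph_connected
  exact SimpleGraph.Connected.map
    (⟨fun a => ⟨a.1, a.2⟩, fun {a b} h => w.toSubgraph.adj_sub h⟩ :
      w.toSubgraph.coe →g G.induce w.toSubgraph.verts)
    (fun b => ⟨⟨b.1, b.2⟩, rfl⟩) h1

lemma induce_singleton_connected {V : Type*} (G : SimpleGraph V) (x : V) :
    (G.induce {x}).Connected := by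
  rw [SimpleGraph.connected_iff]
  refine ⟨fun a b => ?_, ⟨⟨x, rfl⟩⟩⟩
  have : a = b := Subtype.ext (a.2.trans b.2.symm)
  exact this ▸ SimpleGraph.Reachable.refl _

lemma reachable_transfer {A B : Type*} {G₁ : SimpleGraph A} {G₂ : SimpleGraph B} (f : A → B)
    (h : ∀ a b, G₁.Adj a b → G₂.Reachable (f a) (f b)) {x y : A} :
    G₁.Reachable x y → G₂.Reachable (f x) (f y) := by
  rintro ⟨p⟩
  induction p with
  | nil => exact SimpleGraph.Reachable.refl _
  | cons h' p ih => exact (h _ _ h').trans ih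

lemma edge_at_start {W : Type*} {H : SimpleGraph W} {a b w : W} {p : H.Walk a b}
    (hp : p.IsPath) (he : s(a, w) ∈ p.edges) : w = p.getVert 1 := by
  cases p with
  | nil => simp at he
  | cons h q =>
    rw [SimpleGraph.Walk.edges_cons, List.mem_cons] at he
    rcases he with he | he
    · rw [Sym2.eq_iff] at he
      rcases he with ⟨-, rfl⟩ | ⟨rfl, rfl⟩
      · simp
      · exact absurd rfl h.ne
    · exact absurd (SimpleGraph.Walk.fst_mem_support_of_mem_edges q he)
        ((SimpleGraph.Walk.cons_isPath_iff h q).1 hp).2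

lemma exists_cycle_of_min_degree_two {W : Type*} [Fintype W] [DecidableEq W] [Nonempty W]
    (H : SimpleGraph W) [DecidableRel H.Adj] (hdeg : ∀ w : W, 2 ≤ H.degree w) :
    ∃ (v : W) (c : H.Walk v v), c.IsCycle := by
  classical
  set P : ℕ → Prop := fun n => ∃ (a b : W) (p : H.Walk a b), p.IsPath ∧ p.length = n with hP
  have hP0 : P 0 := ⟨Classical.arbitrary W, _, .nil, SimpleGraph.Walk.IsPath.nil, rfl⟩
  set N := Fintype.card W with hN
  set n₀ := Nat.findGreatest P N with hn₀
  have hspec : P n₀ := Nat.findGreatest_spec (Nat.zero_le N) hP0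
  obtain ⟨a, b, p, hpath, hlen⟩ := hspec
  have hmax : ∀ {c d : W} (q : H.Walk c d), q.IsPath → q.length ≤ n₀ := by
    intro c d q hq
    exact Nat.le_findGreatest (le_of_lt hq.length_lt) ⟨c, d, q, hq, rfl⟩
  -- every neighbor of a lies on p
  have hnbr : ∀ w : W, H.Adj a w → w ∈ p.support := by
    intro w hw
    by_contra hws
    have : (SimpleGraph.Walk.cons hw.symm p).IsPath :=
      (SimpleGraph.Walk.cons_isPath_iff _ _).2 ⟨hpath, hws⟩
    have := hmax _ this
    simp [SimpleGraph.Walk.length_cons, hlen] at this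
  -- two distinct neighbors
  obtain ⟨w1, hw1, w2, hw2, hww⟩ := Finset.one_lt_card.1 (lt_of_lt_of_le one_lt_two (hdeg a))
  rw [SimpleGraph.mem_neighborFinset] at hw1 hw2
  -- choose neighbor different from getVert 1
  obtain ⟨w, hw, hwg⟩ : ∃ w, H.Adj a w ∧ w ≠ p.getVert 1 := by
    by_cases h1 : w1 = p.getVert 1
    · exact ⟨w2, hw2, fun h => hww (h1.trans h.symm)⟩
    · exact ⟨w1, hw1, h1⟩
  have hwsup := hnbr w hw
  refine ⟨w, SimpleGraph.Walk.cons hw.symm (p.takeUntil w hwsup), ?_⟩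
  rw [SimpleGraph.Walk.cons_isCycle_iff]
  refine ⟨hpath.takeUntil hwsup, fun hmem => ?_⟩
  have : s(a, w) ∈ p.edges := by
    have := SimpleGraph.Walk.edges_takeUntil_subset p hwsup hmem
    rwa [Sym2.eq_swap] at this
  exact hwg (edge_at_start hpath this)
open Finset SimpleGraph

lemma build_K4 {V : Type*} (G : SimpleGraph V) (A0 A1 A2 A3 : Set V)
    (n0 : A0.Nonempty) (n1 : A1.Nonempty) (n2 : A2.Nonempty) (n3 : A3.Nonempty)
    (c0 : (G.induce A0).Connected) (c1 : (G.induce A1).Connected)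
    (c2 : (G.induce A2).Connected) (c3 : (G.induce A3).Connected)
    (d01 : Disjoint A0 A1) (d02 : Disjoint A0 A2) (d03 : Disjoint A0 A3)
    (d12 : Disjoint A1 A2) (d13 : Disjoint A1 A3) (d23 : Disjoint A2 A3)
    (e01 : ∃ x ∈ A0, ∃ y ∈ A1, G.Adj x y) (e02 : ∃ x ∈ A0, ∃ y ∈ A2, G.Adj x y)
    (e03 : ∃ x ∈ A0, ∃ y ∈ A3, G.Adj x y) (e12 : ∃ x ∈ A1, ∃ y ∈ A2, G.Adj x y)
    (e13 : ∃ x ∈ A1, ∃ y ∈ A3, G.Adj x y) (e23 : ∃ x ∈ A2, ∃ y ∈ A3, G.Adj x y) :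
    HasMinor G (completeGraph (Fin 4)) := by
  have sw : ∀ (A B : Set V), (∃ x ∈ A, ∃ y ∈ B, G.Adj x y) →
      ∃ x ∈ B, ∃ y ∈ A, G.Adj x y := by
    rintro A B ⟨x, hx, y, hy, h⟩; exact ⟨y, hy, x, hx, h.symm⟩
  refine ⟨![A0, A1, A2, A3], ?_, ?_, ?_, ?_⟩
  · intro i; fin_cases i <;>
      simp only [Matrix.cons_val_zero, Matrix.cons_val_one, Matrix.cons_val_two,
        Matrix.cons_val_three, Matrix.head_cons, Matrix.vecTail, Matrix.vecHead,
        Function.comp] <;> assumption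
  · intro i; fin_cases i <;>
      simp only [Matrix.cons_val_zero, Matrix.cons_val_one, Matrix.cons_val_two,
        Matrix.cons_val_three, Matrix.head_cons, Matrix.vecTail, Matrix.vecHead,
        Function.comp] <;> assumption
  · intro i j hij
    fin_cases i <;> fin_cases j <;>
      simp only [Matrix.cons_val_zero, Matrix.cons_val_one, Matrix.cons_val_two,
        Matrix.cons_val_three, Matrix.head_cons, Matrix.vecTail, Matrix.vecHead,
        Function.comp] <;>
      first
        | exact absurd rfl hij
        | assumption
        | exact d01.symm | exact d02.symm | exact d03.symm
        | exact d12.symm | exact d13.symm | exact d23.symm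
  · intro a b hab
    fin_cases a <;> fin_cases b <;>
      simp only [Matrix.cons_val_zero, Matrix.cons_val_one, Matrix.cons_val_two,
        Matrix.cons_val_three, Matrix.head_cons, Matrix.vecTail, Matrix.vecHead,
        Function.comp] <;>
      first
        | exact absurd rfl hab.ne
        | assumption
        | exact sw _ _ e01 | exact sw _ _ e02 | exact sw _ _ e03
        | exact sw _ _ e12 | exact sw _ _ e13 | exact sw _ _ e23

lemma minor_of_min_degree {V : Type*} [Fintype V] [DecidableEq V] (G : SimpleGraph V)
    [DecidableRel G.Adj] [Nonempty V] (hdeg : ∀ v : V, 3 ≤ G.degree v)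
    (hcom : ∀ u v : V, G.Adj u v →
      2 ≤ (Finset.univ.filter fun w => G.Adj u w ∧ G.Adj v w).card) :
    HasMinor G (completeGraph (Fin 4)) := by
  classical
  obtain ⟨u⟩ := ‹Nonempty V›
  set s : Set V := G.neighborSet u with hs
  haveI hdr : DecidableRel (G.induce s).Adj := fun a b => inferInstanceAs (Decidable (G.Adj a b))
  set H : SimpleGraph s := G.induce s with hH
  have hadjG : ∀ {a b : s}, H.Adj a b → G.Adj ↑a ↑b := fun h => h
  have husnot : u ∉ s := fun h => G.irrefl h
  have hus : ∀ x : s, u ≠ ↑x := by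
    intro x h
    have hx := x.2
    rw [← h] at hx
    exact G.irrefl hx
  haveI hne : Nonempty s := by
    have h0 : 0 < G.degree u := lt_of_lt_of_le (by norm_num) (hdeg u)
    rw [← SimpleGraph.card_neighborFinset_eq_degree] at h0
    obtain ⟨w, hw⟩ := Finset.card_pos.1 h0
    exact ⟨⟨w, (SimpleGraph.mem_neighborFinset G u w).1 hw⟩⟩
  have hdeg2 : ∀ x : s, 2 ≤ H.degree x := by
    intro x
    have hsub := hcom u ↑x x.2
    have himg : (Finset.univ.filter fun w => G.Adj u w ∧ G.Adj (↑x) w) ⊆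
        (H.neighborFinset x).image Subtype.val := by
      intro w hw
      simp only [Finset.mem_filter, Finset.mem_univ, true_and] at hw
      refine Finset.mem_image.2 ⟨⟨w, hw.1⟩, ?_, rfl⟩
      rw [SimpleGraph.mem_neighborFinset]
      exact hw.2
    calc 2 ≤ _ := hsub
    _ ≤ ((H.neighborFinset x).image Subtype.val).card := Finset.card_le_card himg
    _ = (H.neighborFinset x).card := Finset.card_image_of_injective _ Subtype.val_injective
    _ = H.degree x := H.card_neighborFinset_eq_degree x
  obtain ⟨v0, c, hc⟩ := exists_cycle_of_min_degree_two H hdeg2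
  have hlen := hc.three_le_length
  have hnd := hc.support_nodup
  cases c with
  | nil => simp at hlen
  | @cons _ w1 _ h₁ p₁ =>
    cases p₁ with
    | nil => simp at hlen
    | @cons _ w2 _ h₂ p₂ =>
      cases p₂ with
      | nil => simp at hlen
      | @cons _ w2' _ h₄ p₃ =>
        obtain ⟨w3, q, h₃, hq⟩ := SimpleGraph.Walk.exists_cons_eq_concat h₄ p₃
        rw [hq] at hnd
        simp only [SimpleGraph.Walk.support_cons, SimpleGraph.Walk.support_concat,
          List.concat_eq_append, List.tail_cons] at hnd
        have h5 := List.nodup_cons.1 hnd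
        have happ := List.nodup_append.1 h5.2
        have hw1q : w1 ∉ q.support := fun h => h5.1 (List.mem_append_left _ h)
        have hw1v0 : w1 ≠ v0 := fun h => h5.1 (List.mem_append_right _ (by simp [h]))
        have hv0q : v0 ∉ q.support := fun h => happ.2.2 _ h _ (by simp) rfl
        -- map the connecting walk into G
        let ι : H →g G := (SimpleGraph.Embedding.induce s).toHom
        have hι : ∀ x : s, ι x = ↑x := fun x => rfl
        let qG := q.map ι
        set A3 : Set V := {x | x ∈ qG.support} with hA3
        have hin : ∀ (a : s), a ∈ q.support → (↑a : V) ∈ A3 := by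
          intro a ha
          show (↑a : V) ∈ qG.support
          rw [SimpleGraph.Walk.support_map]
          exact List.mem_map.2 ⟨a, ha, rfl⟩
        have hout : ∀ x : V, x ∈ A3 → ∃ a : s, a ∈ q.support ∧ (↑a : V) = x := by
          intro x hx
          have hx' : x ∈ qG.support := hx
          rw [SimpleGraph.Walk.support_map] at hx'
          obtain ⟨a, ha, rfl⟩ := List.mem_map.1 hx'
          exact ⟨a, ha, rfl⟩
        have hw2A3 : (↑w2 : V) ∈ A3 := hin w2 q.start_mem_support
        have hw3A3 : (↑w3 : V) ∈ A3 := hin w3 q.end_mem_support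
        refine build_K4 G {u} {↑v0} {↑w1} A3 ⟨u, rfl⟩ ⟨↑v0, rfl⟩ ⟨↑w1, rfl⟩ ⟨↑w2, hw2A3⟩
          (induce_singleton_connected G u) (induce_singleton_connected G _)
          (induce_singleton_connected G _) (induce_support_connected qG)
          ?_ ?_ ?_ ?_ ?_ ?_ ?_ ?_ ?_ ?_ ?_ ?_
        · exact Set.disjoint_singleton.2 (hus v0)
        · exact Set.disjoint_singleton.2 (hus w1)
        · rw [Set.disjoint_left]
          rintro x rfl hx
          obtain ⟨a, -, ha⟩ := hout _ hx
          exact hus a ha.symm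
        · exact Set.disjoint_singleton.2
            (fun h => h₁.ne (Subtype.val_injective h))
        · rw [Set.disjoint_left]
          rintro x rfl hx
          obtain ⟨a, haq, ha⟩ := hout _ hx
          exact hv0q ((Subtype.val_injective ha) ▸ haq)
        · rw [Set.disjoint_left]
          rintro x rfl hx
          obtain ⟨a, haq, ha⟩ := hout _ hx
          exact hw1q ((Subtype.val_injective ha) ▸ haq)
        · exact ⟨u, rfl, ↑v0, rfl, v0.2⟩
        · exact ⟨u, rfl, ↑w1, rfl, w1.2⟩
        · exact ⟨u, rfl, ↑w2, hw2A3, w2.2⟩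
        · exact ⟨↑v0, rfl, ↑w1, rfl, hadjG h₁⟩
        · exact ⟨↑v0, rfl, ↑w3, hw3A3, (hadjG h₃).symm⟩
        · exact ⟨↑w1, rfl, ↑w2, hw2A3, hadjG h₂⟩

section Deletion
variable {V : Type*} [Fintype V] [DecidableEq V] (G : SimpleGraph V) [DecidableRel G.Adj]

instance instDecInduce (s : Set V) : DecidableRel (G.induce s).Adj :=
  fun a b => inferInstanceAs (Decidable (G.Adj a b))

lemma adjPairs_delete (v : V) [Fintype ↥{x : V | x ≠ v}] :
    adjPairs G ≤ adjPairs (G.induce {x : V | x ≠ v}) + 2 * G.degree v := by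
  classical
  set SA := Finset.univ.filter (fun p : V × V => G.Adj p.1 p.2) with hSA
  have h1 : SA.card = (SA.filter (fun p => p.1 = v)).card +
      (SA.filter (fun p => ¬ p.1 = v)).card :=
    (Finset.card_filter_add_card_filter_not _).symm
  have h2 : (SA.filter (fun p => ¬ p.1 = v)).card =
      ((SA.filter (fun p => ¬ p.1 = v)).filter (fun p => p.2 = v)).card +
      ((SA.filter (fun p => ¬ p.1 = v)).filter (fun p => ¬ p.2 = v)).card :=
    (Finset.card_filter_add_card_filter_not _).symm
  have b1 : (SA.filter (fun p => p.1 = v)).card ≤ G.degree v := by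
    rw [← SimpleGraph.card_neighborFinset_eq_degree]
    apply Finset.card_le_card_of_injOn (fun p => p.2)
    · intro p hp
      simp only [hSA, Finset.mem_coe, Finset.mem_filter, Finset.mem_univ, true_and] at hp
      rw [Finset.mem_coe, SimpleGraph.mem_neighborFinset]
      exact hp.2 ▸ hp.1
    · intro p hp q hq h
      simp only [hSA, Finset.coe_filter, Set.mem_setOf_eq] at hp hq
      exact Prod.ext (hp.2.trans hq.2.symm) h
  have b2 : ((SA.filter (fun p => ¬ p.1 = v)).filter (fun p => p.2 = v)).card ≤ G.degree v := by
    rw [← SimpleGraph.card_neighborFinset_eq_degree]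
    apply Finset.card_le_card_of_injOn (fun p => p.1)
    · intro p hp
      simp only [hSA, Finset.mem_coe, Finset.mem_filter, Finset.mem_univ, true_and] at hp
      rw [Finset.mem_coe, SimpleGraph.mem_neighborFinset]
      exact (hp.2 ▸ hp.1.1 : G.Adj p.1 v).symm
    · intro p hp q hq h
      simp only [hSA, Finset.coe_filter, Set.mem_setOf_eq] at hp hq
      exact Prod.ext h (hp.2.trans hq.2.symm)
  have b3 : ((SA.filter (fun p => ¬ p.1 = v)).filter (fun p => ¬ p.2 = v)).card ≤
      adjPairs (G.induce {x : V | x ≠ v}) := by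
    apply Finset.card_le_card_of_surjOn
      (fun q : ↥{x : V | x ≠ v} × ↥{x : V | x ≠ v} => ((q.1 : V), (q.2 : V)))
    intro p hp
    simp only [hSA, Finset.coe_filter, Set.mem_setOf_eq, Finset.mem_filter,
      Finset.mem_univ, true_and] at hp
    obtain ⟨⟨hadj, hp1⟩, hp2⟩ := hp
    refine ⟨(⟨p.1, hp1⟩, ⟨p.2, hp2⟩), ?_, rfl⟩
    simp only [adjPairs, Finset.coe_filter, Set.mem_setOf_eq, Finset.mem_univ, true_and]
    exact hadj
  calc adjPairs G = SA.card := rfl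
  _ = _ := h1
  _ ≤ G.degree v + ((SA.filter (fun p => ¬ p.1 = v)).card) := by omega
  _ ≤ _ := by rw [h2]; omega

end Deletion

section Contraction
variable {V : Type*} [DecidableEq V] (G : SimpleGraph V) [DecidableRel G.Adj]

/-- the contraction of edge `uv` onto `u`, living on the vertex set without `v`. -/
def CG (u v : V) : SimpleGraph {x : V // x ≠ v} where
  Adj a b := a ≠ b ∧ (G.Adj a b ∨ ((a : V) = u ∧ G.Adj v b) ∨ ((b : V) = u ∧ G.Adj a v))
  symm := ⟨by
    rintro a b ⟨hne, h | ⟨h1, h2⟩ | ⟨h1, h2⟩⟩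
    · exact ⟨hne.symm, Or.inl h.symm⟩
    · exact ⟨hne.symm, Or.inr (Or.inr ⟨h1, h2.symm⟩)⟩
    · exact ⟨hne.symm, Or.inr (Or.inl ⟨h1, h2.symm⟩)⟩⟩
  loopless := ⟨fun a h => h.1 rfl⟩

instance instDecCG (u v : V) : DecidableRel (CG G u v).Adj :=
  fun a b => inferInstanceAs (Decidable (_ ∧ _))

lemma CG_minor_lift {u v : V} (huv : G.Adj u v) :
    HasMinor (CG G u v) (completeGraph (Fin 4)) → HasMinor G (completeGraph (Fin 4)) := by
  have hune : u ≠ v := huv.ne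
  rintro ⟨φ, hne, hconn, hdisj, hedge⟩
  set u' : {x : V // x ≠ v} := ⟨u, hune⟩ with hu'
  set ψ : Fin 4 → Set V :=
    fun w => (Subtype.val '' φ w) ∪ {x | x = v ∧ u' ∈ φ w} with hψ
  have hmemval : ∀ (w : Fin 4) (a : {x : V // x ≠ v}), a ∈ φ w → (a : V) ∈ ψ w :=
    fun w a ha => Or.inl ⟨a, ha, rfl⟩
  have hmemv : ∀ (w : Fin 4), u' ∈ φ w → v ∈ ψ w := fun w h => Or.inr ⟨rfl, h⟩
  refine ⟨ψ, ?_, ?_, ?_, ?_⟩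
  · intro w
    obtain ⟨a, ha⟩ := hne w
    exact ⟨a, hmemval w a ha⟩
  · -- connectivity
    intro w
    rw [SimpleGraph.connected_iff]
    have hj : ∀ (a : {x : V // x ≠ v}) (ha : a ∈ φ w), ((a : V) ∈ ψ w) := hmemval w
    set j : {a : {x : V // x ≠ v} // a ∈ φ w} → {x : V // x ∈ ψ w} :=
      fun a => ⟨(a.1 : V), hj a.1 a.2⟩ with hjdef
    have hstep : ∀ a b : {a // a ∈ φ w}, ((CG G u v).induce (φ w)).Adj a b →
        (G.induce (ψ w)).Reachable (j a) (j b) := by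
      intro a b hab
      obtain ⟨hne', hcase⟩ := (hab : (CG G u v).Adj a.1 b.1)
      rcases hcase with h | ⟨h1, h2⟩ | ⟨h1, h2⟩
      · exact SimpleGraph.Adj.reachable (h : G.Adj _ _)
      · -- a.1 = u, edge via v
        have hu'mem : u' ∈ φ w := by
          have : a.1 = u' := Subtype.ext h1
          exact this ▸ a.2
        have hvmem : v ∈ ψ w := hmemv w hu'mem
        have r1 : (G.induce (ψ w)).Adj (j a) ⟨v, hvmem⟩ := by
          have h1' : ((a.1 : {x : V // x ≠ v}) : V) = u := h1
          show G.Adj ((a.1 : {x : V // x ≠ v}) : V) v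
          rw [h1']
          exact huv
        have r2 : (G.induce (ψ w)).Adj ⟨v, hvmem⟩ (j b) := h2
        exact r1.reachable.trans r2.reachable
      · have hu'mem : u' ∈ φ w := by
          have : b.1 = u' := Subtype.ext h1
          exact this ▸ b.2
        have hvmem : v ∈ ψ w := hmemv w hu'mem
        have r1 : (G.induce (ψ w)).Adj (j a) ⟨v, hvmem⟩ := h2
        have r2 : (G.induce (ψ w)).Adj ⟨v, hvmem⟩ (j b) := by
          have h1' : ((b.1 : {x : V // x ≠ v}) : V) = u := h1
          show G.Adj v ((b.1 : {x : V // x ≠ v}) : V)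
          rw [h1']
          exact huv.symm
        exact r1.reachable.trans r2.reachable
    have hreduce : ∀ x : {x : V // x ∈ ψ w}, ∃ a : {a // a ∈ φ w},
        (G.induce (ψ w)).Reachable x (j a) := by
      rintro ⟨x, hx | hx⟩
      · obtain ⟨a, ha, rfl⟩ := hx
        exact ⟨⟨a, ha⟩, SimpleGraph.Reachable.refl _⟩
      · obtain ⟨rfl, hu'mem⟩ := hx
        refine ⟨⟨u', hu'mem⟩, SimpleGraph.Adj.reachable ?_⟩
        show G.Adj _ _
        exact huv.symm
    constructor
    · intro x y
      obtain ⟨a, hxa⟩ := hreduce x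
      obtain ⟨b, hyb⟩ := hreduce y
      have hab : ((CG G u v).induce (φ w)).Reachable a b := by
        have := (hconn w).preconnected a b
        exact this
      exact (hxa.trans (reachable_transfer j hstep hab)).trans hyb.symm
    · obtain ⟨a, ha⟩ := hne w
      exact ⟨⟨(a : V), hmemval w a ha⟩⟩
  · -- disjointness
    intro a b hab
    rw [Set.disjoint_left]
    rintro x (⟨c, hc, rfl⟩ | ⟨rfl, hc⟩) hxb
    · rcases hxb with ⟨d, hd, hdc⟩ | ⟨h1, -⟩
      · exact Set.disjoint_left.1 (hdisj hab) hc (Subtype.val_injective hdc ▸ hd)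
      · exact c.2 h1
    · rcases hxb with ⟨d, hd, hdc⟩ | ⟨-, hc'⟩
      · exact d.2 hdc
      · exact Set.disjoint_left.1 (hdisj hab) hc hc'
  · -- edges
    intro a b hab
    obtain ⟨x, hx, y, hy, hxy⟩ := hedge a b hab
    obtain ⟨-, hcase⟩ := hxy
    rcases hcase with h | ⟨h1, h2⟩ | ⟨h1, h2⟩
    · exact ⟨x, hmemval a x hx, y, hmemval b y hy, h⟩
    · have hxu : x = u' := Subtype.ext (show (x : V) = (u' : V) from h1)
      have : u' ∈ φ a := hxu ▸ hx
      exact ⟨v, hmemv a this, y, hmemval b y hy, h2⟩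
    · have hyu : y = u' := Subtype.ext (show (y : V) = (u' : V) from h1)
      have : u' ∈ φ b := hyu ▸ hy
      exact ⟨x, hmemval a x hx, v, hmemv b this, h2⟩

end Contraction

lemma adjPairs_contract {V : Type*} [Fintype V] [DecidableEq V] (G : SimpleGraph V)
    [DecidableRel G.Adj] {u v : V} (huv : G.Adj u v)
    (hk : (Finset.univ.filter fun w => G.Adj u w ∧ G.Adj v w).card ≤ 1) :
    adjPairs G ≤ adjPairs (CG G u v) + 4 := by
  classical
  have hune : u ≠ v := huv.ne
  set π : V → {x : V // x ≠ v} := fun x => if h : x = v then ⟨u, hune⟩ else ⟨x, h⟩ with hπ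
  have πv : π v = ⟨u, hune⟩ := dif_pos rfl
  have πx : ∀ {x : V} (h : x ≠ v), π x = ⟨x, h⟩ := fun h => dif_neg h
  have hππ : ∀ x y : V, π x = π y → x = y ∨ (x = v ∧ y = u) ∨ (x = u ∧ y = v) := by
    intro x y h
    by_cases hx : x = v <;> by_cases hy : y = v
    · exact Or.inl (hx.trans hy.symm)
    · rw [hx, πv, πx hy] at h
      exact Or.inr (Or.inl ⟨hx, (congrArg Subtype.val h).symm⟩)
    · rw [hy, πv, πx hx] at h
      exact Or.inr (Or.inr ⟨congrArg Subtype.val h, hy⟩)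
    · rw [πx hx, πx hy] at h
      exact Or.inl (congrArg Subtype.val h)
  set F : Finset V := Finset.univ.filter (fun w => G.Adj u w ∧ G.Adj v w) with hF
  set SA := Finset.univ.filter (fun p : V × V => G.Adj p.1 p.2) with hSA
  set Bad : Finset (V × V) :=
    ({(u, v), (v, u)} : Finset (V × V)) ∪ F.image (fun w => (v, w)) ∪ F.image (fun w => (w, v))
    with hBadDef
  have hBadCard : Bad.card ≤ 4 := by
    calc Bad.card ≤ (({(u, v), (v, u)} : Finset (V × V)) ∪ F.image (fun w => (v, w))).card
        + (F.image (fun w => (w, v))).card := Finset.card_union_le _ _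
    _ ≤ (({(u, v), (v, u)} : Finset (V × V)).card + (F.image (fun w => (v, w))).card)
        + (F.image (fun w => (w, v))).card := by
        exact Nat.add_le_add_right (Finset.card_union_le _ _) _
    _ ≤ (2 + 1) + 1 := by
        have c1 : ({(u, v), (v, u)} : Finset (V × V)).card ≤ 2 :=
          Finset.card_insert_le _ _ |>.trans (by simp)
        have c2 : (F.image (fun w => (v, w))).card ≤ 1 := (Finset.card_image_le).trans hk
        have c3 : (F.image (fun w => (w, v))).card ≤ 1 := (Finset.card_image_le).trans hk
        omega
    _ = 4 := rfl
  have hsplit : SA.card ≤ (SA \ Bad).card + 4 :=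
    le_trans (Finset.card_le_card_sdiff_add_card (s := SA) (t := Bad)) (by omega)
  have hrest : (SA \ Bad).card ≤ adjPairs (CG G u v) := by
    apply Finset.card_le_card_of_injOn (fun p : V × V => (π p.1, π p.2))
    · -- maps to adjacent pairs of CG
      intro p hp
      rw [Finset.mem_coe, Finset.mem_sdiff] at hp
      obtain ⟨hpSA, hpBad⟩ := hp
      simp only [hSA, Finset.mem_filter, Finset.mem_univ, true_and] at hpSA
      simp only [hBadDef, Finset.mem_union, Finset.mem_insert, Finset.mem_singleton,
        Finset.mem_image, hF, Finset.mem_filter, Finset.mem_univ, true_and, not_or,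
        not_exists, not_and] at hpBad
      obtain ⟨⟨⟨hnuv, hnvu⟩, hbad3⟩, hbad4⟩ := hpBad
      simp only [adjPairs, Finset.mem_coe, Finset.mem_filter, Finset.mem_univ, true_and]
      by_cases hp1 : p.1 = v <;> by_cases hp2 : p.2 = v
      · exact absurd (hp1 ▸ hp2 ▸ hpSA) (G.irrefl)
      · refine ⟨?_, ?_⟩
        · rw [hp1, πv, πx hp2]
          intro h
          have : u = p.2 := congrArg Subtype.val h
          exact hnvu (Prod.ext hp1 this.symm)
        · rw [hp1, πv, πx hp2]
          exact Or.inr (Or.inl ⟨rfl, hp1 ▸ hpSA⟩)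
      · refine ⟨?_, ?_⟩
        · rw [hp2, πv, πx hp1]
          intro h
          have : p.1 = u := congrArg Subtype.val h
          exact hnuv (Prod.ext this hp2)
        · rw [hp2, πv, πx hp1]
          exact Or.inr (Or.inr ⟨rfl, hp2 ▸ hpSA⟩)
      · refine ⟨?_, ?_⟩
        · rw [πx hp1, πx hp2]
          intro h
          exact hpSA.ne (congrArg Subtype.val h)
        · rw [πx hp1, πx hp2]
          exact Or.inl hpSA
    · -- injectivity on the rest
      intro p hp q hq heq
      simp only [Finset.coe_sdiff, Set.mem_diff, Finset.mem_coe, Finset.mem_sdiff] at hp hq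
      obtain ⟨hpSA, hpBad⟩ := hp
      obtain ⟨hqSA, hqBad⟩ := hq
      simp only [hSA, Finset.mem_filter, Finset.mem_univ, true_and] at hpSA hqSA
      simp only [hBadDef, Finset.mem_union, Finset.mem_insert, Finset.mem_singleton,
        Finset.mem_image, hF, Finset.mem_filter, Finset.mem_univ, true_and, not_or,
        not_exists, not_and] at hpBad hqBad
      obtain ⟨⟨⟨hpnuv, hpnvu⟩, hpbad3⟩, hpbad4⟩ := hpBad
      obtain ⟨⟨⟨hqnuv, hqnvu⟩, hqbad3⟩, hqbad4⟩ := hqBad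
      have h1 : π p.1 = π q.1 := congrArg Prod.fst heq
      have h2 : π p.2 = π q.2 := congrArg Prod.snd heq
      -- helper for second components when first components are equal
      rcases hππ _ _ h1 with e1 | ⟨ep, eq1⟩ | ⟨ep, eq1⟩
      · -- p.1 = q.1
        rcases hππ _ _ h2 with e2 | ⟨ep2, eq2⟩ | ⟨ep2, eq2⟩
        · exact Prod.ext e1 e2
        · -- p.2 = v, q.2 = u
          exfalso
          have hgp : G.Adj p.1 v := ep2 ▸ hpSA
          have hgq : G.Adj q.1 u := eq2 ▸ hqSA
          have hp1u : p.1 ≠ u := fun h => hpnuv (Prod.ext h ep2)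
          have : G.Adj u p.1 ∧ G.Adj v p.1 := ⟨(e1 ▸ hgq : G.Adj p.1 u).symm, hgp.symm⟩
          exact hpbad4 p.1 this (Prod.ext rfl ep2.symm)
        · -- p.2 = u, q.2 = v
          exfalso
          have hgp : G.Adj p.1 u := ep2 ▸ hpSA
          have hgq : G.Adj q.1 v := eq2 ▸ hqSA
          have : G.Adj u q.1 ∧ G.Adj v q.1 := ⟨(e1 ▸ hgp : G.Adj q.1 u).symm, hgq.symm⟩
          exact hqbad4 q.1 this (Prod.ext rfl eq2.symm)
      · -- p.1 = v, q.1 = u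
        exfalso
        have hgp : G.Adj v p.2 := ep ▸ hpSA
        have hnup2 : ¬ G.Adj u p.2 := by
          intro hadj
          exact hpbad3 p.2 ⟨hadj, hgp⟩ (Prod.ext ep.symm rfl)
        rcases hππ _ _ h2 with e2 | ⟨ep2, eq2⟩ | ⟨ep2, eq2⟩
        · -- p.2 = q.2 : q = (u, p.2) adjacent gives G.Adj u p.2
          exact hnup2 (eq1 ▸ e2 ▸ hqSA)
        · -- p.2 = v : p = (v,v) not adjacent
          exact G.irrefl (ep ▸ ep2 ▸ hpSA)
        · -- p.2 = u, q.2 = v : q = (u, v) excluded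
          exact hqnuv (Prod.ext eq1 eq2)
      · -- p.1 = u, q.1 = v
        exfalso
        have hgq : G.Adj v q.2 := eq1 ▸ hqSA
        have hnuq2 : ¬ G.Adj u q.2 := by
          intro hadj
          exact hqbad3 q.2 ⟨hadj, hgq⟩ (Prod.ext eq1.symm rfl)
        rcases hππ _ _ h2 with e2 | ⟨ep2, eq2⟩ | ⟨ep2, eq2⟩
        · exact hnuq2 (e2 ▸ (ep ▸ hpSA : G.Adj u p.2))
        · -- p.2 = v, q.2 = u : p = (u, v) excluded
          exact hpnuv (Prod.ext ep ep2)
        · -- q.2 = v : q = (v, v)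
          exact G.irrefl (eq1 ▸ eq2 ▸ hqSA)
  calc adjPairs G = SA.card := rfl
  _ ≤ (SA \ Bad).card + 4 := hsplit
  _ ≤ adjPairs (CG G u v) + 4 := by omega

universe u

lemma card_ne_eq {V : Type u} [Fintype V] [DecidableEq V] (v : V) :
    Fintype.card ↥{x : V | x ≠ v} = Fintype.card V - 1 := by
  have e1 : Fintype.card ↥{x : V | x ≠ v} = Fintype.card {x : V // ¬ x = v} := by
    apply Fintype.card_congr
    exact Equiv.refl _
  rw [e1, Fintype.card_subtype_compl, Fintype.card_subtype_eq]

lemma key_minor (n : ℕ) : ∀ {V : Type u} [Fintype V] [DecidableEq V] (G : SimpleGraph V)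
    [DecidableRel G.Adj], Fintype.card V = n → 2 ≤ n → 4 * n ≤ adjPairs G + 4 →
    HasMinor G (completeGraph (Fin 4)) := by
  induction n using Nat.strong_induction_on with
  | _ n ih =>
    intro V _ _ G _ hcard h2 hA
    by_cases hn3 : n ≤ 3
    · exfalso
      have hle := adjPairs_le G
      rw [hcard] at hle
      interval_cases n <;> omega
    push_neg at hn3
    by_cases hdeg : ∃ w : V, G.degree w ≤ 2
    · obtain ⟨v, hv⟩ := hdeg
      have hcard' : Fintype.card ↥{x : V | x ≠ v} = n - 1 := by
        rw [card_ne_eq, hcard]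
      have hdel := adjPairs_delete G v
      have hmin := ih (n - 1) (by omega) (G.induce {x : V | x ≠ v}) hcard'
        (by omega) (by omega)
      exact hasMinor_lift Subtype.val Subtype.val_injective (fun a b h => h) hmin
    push_neg at hdeg
    by_cases hedge : ∃ a b : V, G.Adj a b ∧
        (Finset.univ.filter fun w => G.Adj a w ∧ G.Adj b w).card ≤ 1
    · obtain ⟨a, b, hab, hk⟩ := hedge
      have hcard' : Fintype.card {x : V // x ≠ b} = n - 1 := by
        have e1 : Fintype.card {x : V // x ≠ b} = Fintype.card ↥{x : V | x ≠ b} :=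
          Fintype.card_congr (Equiv.refl _)
        rw [e1, card_ne_eq, hcard]
      have hcon := adjPairs_contract G hab hk
      have hmin := ih (n - 1) (by omega) (CG G a b) hcard' (by omega) (by omega)
      exact CG_minor_lift G hab hmin
    push_neg at hedge
    haveI : Nonempty V := by
      rw [← Fintype.card_pos_iff, hcard]
      omega
    exact minor_of_min_degree G (fun w => by have := hdeg w; omega)
      (fun a b hab => hedge a b hab)


/-- In an outerplanar graph with vertex cover `S`, the set `D` of vertices outside
`S` with at least 3 neighbors in `S` satisfies `|D| ≤ 2|S| - 3` (when `|D ∪ S| ≥ 2`). -/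
theorem stmt14 {V : Type*} [Fintype V] [DecidableEq V] (G : SimpleGraph V)
    [DecidableRel G.Adj] (hG : Outerplanar G)
    (S : Finset V) (hS : ∀ u v : V, G.Adj u v → u ∈ S ∨ v ∈ S)
    (D : Finset V)
    (hD : D = Finset.univ.filter fun v => v ∉ S ∧ 3 ≤ (S.filter (G.Adj v)).card)
    (hne : 2 ≤ (D ∪ S).card) :
    D.card ≤ 2 * S.card - 3 := by
  classical
  have hDmem : ∀ d ∈ D, d ∉ S ∧ 3 ≤ (S.filter (G.Adj d)).card := by
    intro d hd
    rw [hD, Finset.mem_filter] at hd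
    exact hd.2
  have hDS : Disjoint D S := by
    rw [Finset.disjoint_left]
    intro d hd hds
    exact (hDmem d hd).1 hds
  set T : Finset V := D ∪ S with hT
  have hTcard : T.card = D.card + S.card := Finset.card_union_of_disjoint hDS
  set sT : Set V := (↑T : Set V) with hsT
  haveI : Fintype ↥sT := FinsetCoe.fintype T
  set G' := G.induce sT with hG'
  have hcardT : Fintype.card ↥sT = T.card := by
    have e1 : Fintype.card ↥sT = Fintype.card ↥T := Fintype.card_congr (Equiv.refl _)
    rw [e1, Fintype.card_coe]
  -- no K4 minor in the induced graph
  have hnm : ¬ HasMinor G' (completeGraph (Fin 4)) := by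
    intro hm
    exact hG.1 (hasMinor_lift Subtype.val Subtype.val_injective (fun a b h => h) hm)
  have hkey : ¬ (4 * T.card ≤ adjPairs G' + 4) := by
    intro h
    exact hnm (key_minor T.card G' hcardT hne h)
  -- lower bound on adjPairs G'
  set F1 : Finset (V × V) := (D ×ˢ S).filter (fun p => G.Adj p.1 p.2) with hF1def
  set F2 : Finset (V × V) := (S ×ˢ D).filter (fun p => G.Adj p.1 p.2) with hF2def
  have hF1 : 3 * D.card ≤ F1.card := by
    rw [Finset.card_eq_sum_card_fiberwise (f := Prod.fst) (t := D)
      (fun p hp => (Finset.mem_product.1 (Finset.mem_filter.1 hp).1).1)]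
    calc 3 * D.card = D.card * 3 := by ring
    _ = ∑ _d ∈ D, 3 := by rw [Finset.sum_const, smul_eq_mul]
    _ ≤ _ := by
        apply Finset.sum_le_sum
        intro d hd
        calc 3 ≤ (S.filter (G.Adj d)).card := (hDmem d hd).2
        _ ≤ _ := by
            apply Finset.card_le_card_of_injOn (fun y => (d, y))
            · intro y hy
              rw [Finset.mem_coe, Finset.mem_filter] at hy
              exact Finset.mem_filter.2
                ⟨Finset.mem_filter.2 ⟨Finset.mem_product.2 ⟨hd, hy.1⟩, hy.2⟩, rfl⟩
            · intro y _ z _ h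
              exact congrArg Prod.snd h
  have hF2 : 3 * D.card ≤ F2.card := by
    rw [Finset.card_eq_sum_card_fiberwise (f := Prod.snd) (t := D)
      (fun p hp => (Finset.mem_product.1 (Finset.mem_filter.1 hp).1).2)]
    calc 3 * D.card = D.card * 3 := by ring
    _ = ∑ _d ∈ D, 3 := by rw [Finset.sum_const, smul_eq_mul]
    _ ≤ _ := by
        apply Finset.sum_le_sum
        intro d hd
        calc 3 ≤ (S.filter (G.Adj d)).card := (hDmem d hd).2
        _ ≤ _ := by
            apply Finset.card_le_card_of_injOn (fun y => (y, d))
            · intro y hy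
              rw [Finset.mem_coe, Finset.mem_filter] at hy
              exact Finset.mem_filter.2
                ⟨Finset.mem_filter.2 ⟨Finset.mem_product.2 ⟨hy.1, hd⟩, hy.2.symm⟩, rfl⟩
            · intro y _ z _ h
              exact congrArg Prod.fst h
  have hd12 : Disjoint F1 F2 := by
    rw [Finset.disjoint_left]
    intro p hp1 hp2
    have h1 : p.1 ∈ D := (Finset.mem_product.1 (Finset.mem_filter.1 hp1).1).1
    have h2 : p.1 ∈ S := (Finset.mem_product.1 (Finset.mem_filter.1 hp2).1).1
    exact Finset.disjoint_left.1 hDS h1 h2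
  have hlow : 6 * D.card ≤ adjPairs G' := by
    have hcup : 6 * D.card ≤ (F1 ∪ F2).card := by
      rw [Finset.card_union_of_disjoint hd12]
      omega
    refine le_trans hcup ?_
    apply Finset.card_le_card_of_surjOn (fun q : ↥sT × ↥sT => ((q.1 : V), (q.2 : V)))
    intro p hp
    have hp' : p ∈ F1 ∪ F2 := hp
    have hadj : G.Adj p.1 p.2 := by
      rcases Finset.mem_union.1 hp' with h | h
      · exact (Finset.mem_filter.1 h).2
      · exact (Finset.mem_filter.1 h).2
    have hm1 : p.1 ∈ T := by
      rcases Finset.mem_union.1 hp' with h | h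
      · exact Finset.mem_union_left _ (Finset.mem_product.1 (Finset.mem_filter.1 h).1).1
      · exact Finset.mem_union_right _ (Finset.mem_product.1 (Finset.mem_filter.1 h).1).1
    have hm2 : p.2 ∈ T := by
      rcases Finset.mem_union.1 hp' with h | h
      · exact Finset.mem_union_right _ (Finset.mem_product.1 (Finset.mem_filter.1 h).1).2
      · exact Finset.mem_union_left _ (Finset.mem_product.1 (Finset.mem_filter.1 h).1).2
    refine ⟨(⟨p.1, hm1⟩, ⟨p.2, hm2⟩), ?_, rfl⟩
    simp only [adjPairs, Finset.coe_filter, Set.mem_setOf_eq, Finset.mem_univ, true_and]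
    exact hadj
  obtain ⟨e, he⟩ := even_adjPairs G'
  omega
end

section
/- Every simple outerplanar graph is K_{2,3}-subgraph-free in the following sense used for counting: if G is outerplanar with vertex cover S, and D is the set of degree-2 vertices outside S, then |D| ≤ 4|S| − 6 (for |S| ≥ 2). -/
open SimpleGraph

section helpers
variable {V W : Type*}

/-- Reachability transfer along a map turning edges into reachability. -/
lemma reach_transfer {A : SimpleGraph V} {B : SimpleGraph W} (f : V → W)
    (h : ∀ a b, A.Adj a b → B.Reachable (f a) (f b)) :
    ∀ a b, A.Reachable a b → B.Reachable (f a) (f b) := by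
  intro a b hab
  obtain ⟨w⟩ := hab
  induction w with
  | nil => exact Reachable.refl _
  | cons hadj _ ih => exact (h _ _ hadj).trans ih

lemma singleton_connected (G : SimpleGraph V) (a : V) :
    (G.induce {a}).Connected := by
  have : Nonempty {x // x ∈ ({a} : Set V)} := ⟨⟨a, rfl⟩⟩
  constructor
  intro x y
  have : x = y := Subtype.ext (by rw [show x.1 ∈ ({a}:Set V) from x.2, show y.1 ∈ ({a}:Set V) from y.2])
  exact this ▸ Reachable.refl _
end helpers

section minor
variable {V W X : Type*} {G G' : SimpleGraph V} {K : SimpleGraph X}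

lemma connected_transfer {A : SimpleGraph V} {B : SimpleGraph W} (f : V → W)
    (hsurj : Function.Surjective f)
    (h : ∀ a b, A.Adj a b → B.Reachable (f a) (f b)) (hc : A.Connected) :
    B.Connected := by
  have hne : Nonempty V := hc.nonempty
  have : Nonempty W := ⟨f (Classical.arbitrary V)⟩
  constructor
  intro x y
  obtain ⟨a, rfl⟩ := hsurj x
  obtain ⟨b, rfl⟩ := hsurj y
  exact reach_transfer f h a b (hc.preconnected a b)

lemma minor_mono (hle : G ≤ G') (h : HasMinor G K) : HasMinor G' K := by
  obtain ⟨φ, hne, hconn, hdisj, hedge⟩ := h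
  refine ⟨φ, hne, fun w => ?_, hdisj, fun a b hab => ?_⟩
  · exact (hconn w).mono (fun x y hxy => hle hxy)
  · obtain ⟨x, hx, y, hy, hxy⟩ := hedge a b hab
    exact ⟨x, hx, y, hy, hle hxy⟩

lemma minor_induce {A : Set V} (h : HasMinor (G.induce A) K) : HasMinor G K := by
  obtain ⟨φ, hne, hconn, hdisj, hedge⟩ := h
  refine ⟨fun w => Subtype.val '' φ w, fun w => (hne w).image _, fun w => ?_, ?_, ?_⟩
  · refine connected_transfer (fun x : φ w => (⟨x.1.1, ⟨x.1, x.2, rfl⟩⟩ : Subtype.val '' φ w))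
      ?_ ?_ (hconn w)
    · rintro ⟨y, ⟨x, hx, rfl⟩⟩; exact ⟨⟨x, hx⟩, rfl⟩
    · intro a b hab
      exact Adj.reachable hab
  · intro a b hab
    exact Set.disjoint_image_of_injective Subtype.val_injective (hdisj hab)
  · intro a b hab
    obtain ⟨x, hx, y, hy, hxy⟩ := hedge a b hab
    exact ⟨x.1, ⟨x, hx, rfl⟩, y.1, ⟨y, hy, rfl⟩, hxy⟩
end minor

section sub
variable {V X : Type*} {G : SimpleGraph V} {K : SimpleGraph X}

lemma minor_of_hom (f : X → V) (hinj : Function.Injective f)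
    (hadj : ∀ a b, K.Adj a b → G.Adj (f a) (f b)) : HasMinor G K := by
  refine ⟨fun x => {f x}, fun x => ⟨f x, rfl⟩, fun x => singleton_connected G (f x),
    fun a b hab => Set.disjoint_singleton.mpr (fun h => hab (hinj h)), fun a b hab =>
    ⟨f a, rfl, f b, rfl, hadj a b hab⟩⟩

def contract (G : SimpleGraph V) (u v : V) : SimpleGraph {x : V // x ≠ v} where
  Adj a b := a ≠ b ∧ (G.Adj a b ∨ (a.1 = u ∧ G.Adj v b) ∨ (b.1 = u ∧ G.Adj v a))
  symm := by
    constructor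
    rintro a b ⟨hne, h⟩
    refine ⟨hne.symm, ?_⟩
    rcases h with h | h | h
    · exact Or.inl h.symm
    · exact Or.inr (Or.inr h)
    · exact Or.inr (Or.inl h)
  loopless := by constructor; rintro a ⟨hne, -⟩; exact hne rfl

instance [DecidableEq V] [DecidableRel G.Adj] (u v : V) :
    DecidableRel (contract G u v).Adj := by
  intro a b; unfold contract; simp only; infer_instance

lemma minor_contract {u v : V} (huv : G.Adj u v)
    (h : HasMinor (contract G u v) K) : HasMinor G K := by
  classical
  obtain ⟨φ, hne, hconn, hdisj, hedge⟩ := h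
  set uu : {x : V // x ≠ v} := ⟨u, huv.ne⟩ with huu
  set χ : X → Set V := fun w => {x | x ∈ Subtype.val '' φ w ∨ (x = v ∧ uu ∈ φ w)} with hχ
  have himg : ∀ w (x : {x : V // x ≠ v}), x ∈ φ w → x.1 ∈ χ w := by
    intro w x hx; exact Or.inl ⟨x, hx, rfl⟩
  have hreach : ∀ w (a b : φ w),
      (G.induce (χ w)).Reachable ⟨a.1.1, himg w a a.2⟩ ⟨b.1.1, himg w b b.2⟩ := by
    intro w a b
    refine reach_transfer (fun x : φ w => (⟨x.1.1, himg w x x.2⟩ : χ w)) ?_ a b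
      ((hconn w).preconnected a b)
    rintro a b ⟨hne2, hab | ⟨hau, hvb⟩ | ⟨hbu, hva⟩⟩
    · exact Adj.reachable hab
    · have hau' : a.1.1 = u := hau
      have hvb' : G.Adj v b.1.1 := hvb
      have hvχ : v ∈ χ w := Or.inr ⟨rfl, by
        rw [show uu = a.1 from Subtype.ext hau'.symm]; exact a.2⟩
      have h1 : (G.induce (χ w)).Adj ⟨a.1.1, himg w a a.2⟩ ⟨v, hvχ⟩ := by
        show G.Adj a.1.1 v; rw [hau']; exact huv
      have h2 : (G.induce (χ w)).Adj ⟨v, hvχ⟩ ⟨b.1.1, himg w b b.2⟩ := hvb'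
      exact (h1.reachable).trans h2.reachable
    · have hbu' : b.1.1 = u := hbu
      have hva' : G.Adj v a.1.1 := hva
      have hvχ : v ∈ χ w := Or.inr ⟨rfl, by
        rw [show uu = b.1 from Subtype.ext hbu'.symm]; exact b.2⟩
      have h1 : (G.induce (χ w)).Adj ⟨a.1.1, himg w a a.2⟩ ⟨v, hvχ⟩ := hva'.symm
      have h2 : (G.induce (χ w)).Adj ⟨v, hvχ⟩ ⟨b.1.1, himg w b b.2⟩ := by
        show G.Adj v b.1.1; rw [hbu']; exact huv.symm
      exact (h1.reachable).trans h2.reachable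
  refine ⟨χ, ?_, ?_, ?_, ?_⟩
  · intro w; obtain ⟨x, hx⟩ := hne w; exact ⟨x.1, himg w x hx⟩
  · intro w
    have : Nonempty (χ w) := by obtain ⟨x, hx⟩ := hne w; exact ⟨⟨x.1, himg w x hx⟩⟩
    constructor
    -- every element reachable to an image element
    have step : ∀ x : χ w, ∃ a : φ w, (G.induce (χ w)).Reachable x ⟨a.1.1, himg w a a.2⟩ := by
      rintro ⟨x, hx | ⟨hxv, hu⟩⟩
      · obtain ⟨p, hp, hpe⟩ := hx
        refine ⟨⟨p, hp⟩, ?_⟩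
        have he : (⟨x, Or.inl ⟨p, hp, hpe⟩⟩ : χ w) = ⟨p.1, himg w p hp⟩ :=
          Subtype.ext hpe.symm
        rw [he]
      · refine ⟨⟨uu, hu⟩, ?_⟩
        have hadj : (G.induce (χ w)).Adj ⟨x, Or.inr ⟨hxv, hu⟩⟩ ⟨uu.1, himg w uu hu⟩ := by
          show G.Adj x u
          rw [hxv]; exact huv.symm
        exact hadj.reachable
    intro x y
    obtain ⟨a, hax⟩ := step x
    obtain ⟨b, hby⟩ := step y
    exact hax.trans ((hreach w a b).trans hby.symm)
  · intro a b hab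
    rw [Set.disjoint_left]
    rintro x (⟨p, hp, rfl⟩ | ⟨rfl, hu⟩) hxb
    · rcases hxb with ⟨q, hq, hqe⟩ | ⟨he, -⟩
      · rw [show q = p from Subtype.ext hqe] at hq
        exact Set.disjoint_left.mp (hdisj hab) hp hq
      · exact p.2 he
    · rcases hxb with ⟨q, hq, hqe⟩ | ⟨-, hu'⟩
      · exact q.2 hqe
      · exact Set.disjoint_left.mp (hdisj hab) hu hu'
  · intro a b hab
    obtain ⟨x, hx, y, hy, ⟨hne2, hxy | ⟨hxu, hvy⟩ | ⟨hyu, hvx⟩⟩⟩ := hedge a b hab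
    · exact ⟨x.1, himg a x hx, y.1, himg b y hy, hxy⟩
    · refine ⟨v, Or.inr ⟨rfl, ?_⟩, y.1, himg b y hy, hvy⟩
      rwa [show uu = x from Subtype.ext hxu.symm]
    · refine ⟨x.1, himg a x hx, v, Or.inr ⟨rfl, ?_⟩, hvx.symm⟩
      rwa [show uu = y from Subtype.ext hyu.symm]
end sub

section count
variable {V : Type*} [Fintype V] [DecidableEq V] {G : SimpleGraph V} [DecidableRel G.Adj]

lemma contract_card_edges {u v : V} (huv : G.Adj u v) :
    G.edgeFinset.card ≤ (contract G u v).edgeFinset.card + 1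
      + (G.neighborFinset u ∩ G.neighborFinset v).card := by
  classical
  set C := G.neighborFinset u ∩ G.neighborFinset v with hC
  set L : Finset (Sym2 V) := insert s(u,v) (C.image fun c => s(v,c)) with hL
  have hLcard : L.card ≤ 1 + C.card := by
    calc L.card ≤ (C.image fun c => s(v,c)).card + 1 := Finset.card_insert_le _ _
    _ ≤ C.card + 1 := by gcongr; exact Finset.card_image_le
    _ = 1 + C.card := by omega
  set f : V → {x : V // x ≠ v} := fun a => if h : a = v then ⟨u, huv.ne⟩ else ⟨a, h⟩ with hf
  have hfv : f v = ⟨u, huv.ne⟩ := dif_pos rfl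
  have hfn : ∀ a (h : a ≠ v), f a = ⟨a, h⟩ := fun a h => dif_neg h
  have notuv : ∀ x y : V, s(x,y) = s(u,v) → s(x,y) ∉ L → False := by
    intro x y hxy hmem; exact hmem (by rw [hxy, hL]; exact Finset.mem_insert_self _ _)
  have notvc : ∀ x : V, G.Adj u x → G.Adj v x → s(v,x) ∉ L → False := by
    intro x h1 h2 hmem
    refine hmem ?_
    rw [hL]
    refine Finset.mem_insert_of_mem (Finset.mem_image.mpr ⟨x, ?_, rfl⟩)
    rw [hC]; simp [h1, h2]
  have fcases : ∀ x y, f x = f y → x = y ∨ (x = v ∧ y = u) ∨ (x = u ∧ y = v) := by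
    intro x y h
    by_cases hx : x = v <;> by_cases hy : y = v
    · left; rw [hx, hy]
    · rw [hx, hfv, hfn y hy, Subtype.mk.injEq] at h
      right; left; exact ⟨hx, h.symm⟩
    · rw [hy, hfv, hfn x hx, Subtype.mk.injEq] at h
      right; right; exact ⟨h, hy⟩
    · rw [hfn x hx, hfn y hy, Subtype.mk.injEq] at h
      left; exact h
  have key : ∀ a b c d : V, G.Adj a b → G.Adj c d → s(a,b) ∉ L → s(c,d) ∉ L →
      f a = f c → f b = f d → s(a,b) = s(c,d) := by
    intro a b c d hab hcd haL hcL hac hbd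
    rcases fcases a c hac with h1 | ⟨hav, hcu⟩ | ⟨hau, hcv⟩ <;>
      rcases fcases b d hbd with h2 | ⟨hbv, hdu⟩ | ⟨hbu, hdv⟩
    · rw [h1, h2]
    · -- a=c, b=v, d=u : a common nbr, s(a,v) ∈ L contra
      exfalso
      rw [hdu, ← h1] at hcd
      rw [hbv] at hab
      refine notvc a hcd.symm hab.symm ?_
      intro hmem
      exact haL (by rw [show s(a,b) = s(b,a) from Sym2.eq_swap, hbv]; exact hmem)
    · -- a=c, b=u, d=v
      exfalso
      rw [hbu] at hab
      rw [hdv, ← h1] at hcd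
      refine notvc a hab.symm hcd.symm ?_
      intro hmem
      exact hcL (by rw [show s(c,d) = s(d,c) from Sym2.eq_swap, hdv, ← h1]; exact hmem)
    · -- a=v, c=u, b=d : b common nbr
      exfalso
      rw [hcu, ← h2] at hcd
      rw [hav] at hab
      exact notvc b hcd hab (by rw [← hav]; exact haL)
    · exfalso; rw [hav, hbv] at hab; exact G.loopless.irrefl v hab
    · -- a=v, b=u : edge1 = s(v,u)
      exfalso
      exact notuv a b (by rw [hav, hbu]; exact Sym2.eq_swap) haL
    · -- a=u, c=v, b=d : d common nbr
      exfalso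
      rw [hau, h2] at hab
      rw [hcv] at hcd
      exact notvc d hab hcd (by rw [← hcv]; exact hcL)
    · -- a=u, b=v : edge1 = s(u,v)
      exfalso
      exact notuv a b (by rw [hau, hbv]) haL
    · exfalso; rw [hcv, hdv] at hcd; exact G.loopless.irrefl v hcd
  have hmaps : ∀ e ∈ G.edgeFinset \ L, Sym2.map f e ∈ (contract G u v).edgeFinset := by
    intro e he
    rw [Finset.mem_sdiff] at he
    obtain ⟨heE, heL⟩ := he
    induction e with
    | _ a b =>
      rw [SimpleGraph.mem_edgeFinset, SimpleGraph.mem_edgeSet] at heE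
      rw [Sym2.map_pair_eq, SimpleGraph.mem_edgeFinset, SimpleGraph.mem_edgeSet]
      by_cases hav : a = v
      · have hbv : b ≠ v := fun h => G.loopless.irrefl v (by rw [hav, h] at heE; exact heE)
        have hbu : b ≠ u := by
          rintro rfl
          exact notuv a b (by rw [hav]; exact Sym2.eq_swap) heL
        have hfa : f a = ⟨u, huv.ne⟩ := by rw [hav]; exact hfv
        refine ⟨?_, Or.inr (Or.inl ⟨by rw [hfa], by
          rw [hfn b hbv]
          show G.Adj v b
          rw [hav] at heE; exact heE⟩)⟩
        rw [hfa, hfn b hbv]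
        intro h
        rw [Subtype.mk.injEq] at h
        exact hbu h.symm
      · by_cases hbv : b = v
        · have hau : a ≠ u := by
            rintro rfl
            exact notuv a b (by rw [hbv]) heL
          have hfb : f b = ⟨u, huv.ne⟩ := by rw [hbv]; exact hfv
          refine ⟨?_, Or.inr (Or.inr ⟨by rw [hfb], by
            rw [hfn a hav]
            show G.Adj v a
            rw [hbv] at heE; exact heE.symm⟩)⟩
          rw [hfb, hfn a hav]
          intro h
          rw [Subtype.mk.injEq] at h
          exact hau h
        · rw [hfn a hav, hfn b hbv]
          refine ⟨?_, Or.inl heE⟩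
          intro h
          rw [Subtype.mk.injEq] at h
          exact heE.ne h
  have hinj : Set.InjOn (Sym2.map f) ↑(G.edgeFinset \ L) := by
    intro e1 h1 e2 h2 heq
    rw [Finset.mem_coe, Finset.mem_sdiff, SimpleGraph.mem_edgeFinset] at h1 h2
    induction e1 with
    | _ a b =>
      induction e2 with
      | _ c d =>
        rw [Sym2.map_pair_eq, Sym2.map_pair_eq, Sym2.eq_iff] at heq
        have hab : G.Adj a b := h1.1
        have hcd : G.Adj c d := h2.1
        rcases heq with ⟨hac, hbd⟩ | ⟨had, hbc⟩
        · exact key a b c d hab hcd h1.2 h2.2 hac hbd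
        · rw [show s(c,d) = s(d,c) from Sym2.eq_swap]
          exact key a b d c hab hcd.symm h1.2
            (by rw [show s(d,c) = s(c,d) from Sym2.eq_swap]; exact h2.2) had hbc
  calc G.edgeFinset.card ≤ ((G.edgeFinset \ L) ∪ L).card := by
        apply Finset.card_le_card
        intro e he
        by_cases h : e ∈ L
        · exact Finset.mem_union_right _ h
        · exact Finset.mem_union_left _ (Finset.mem_sdiff.mpr ⟨he, h⟩)
    _ ≤ (G.edgeFinset \ L).card + L.card := Finset.card_union_le _ _
    _ ≤ (contract G u v).edgeFinset.card + (1 + C.card) := by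
        gcongr
        · exact Finset.card_le_card_of_injOn _ hmaps hinj
    _ = (contract G u v).edgeFinset.card + 1 + C.card := by omega

omit [DecidableEq V] in
lemma induce_edges_le (A : Set V) [DecidablePred (· ∈ A)] :
    (G.induce A).edgeFinset.card ≤ G.edgeFinset.card := by
  classical
  apply Finset.card_le_card_of_injOn (Sym2.map Subtype.val)
  · intro e he
    induction e with
    | _ a b =>
      rw [Finset.mem_coe, SimpleGraph.mem_edgeFinset, SimpleGraph.mem_edgeSet] at he
      rw [Sym2.map_pair_eq, Finset.mem_coe, SimpleGraph.mem_edgeFinset, SimpleGraph.mem_edgeSet]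
      exact he
  · exact fun e1 _ e2 _ h => Sym2.map.injective Subtype.val_injective h

lemma isolated_edges_le {v : V} (hv : G.degree v = 0) (w : V) (hw : w ≠ v) :
    G.edgeFinset.card ≤ (G.induce {x : V | x ≠ v}).edgeFinset.card := by
  classical
  have hnadj : ∀ b, ¬ G.Adj v b := by
    intro b hb
    have : b ∈ G.neighborFinset v := (SimpleGraph.mem_neighborFinset _ _ _).mpr hb
    rw [show G.neighborFinset v = ∅ from Finset.card_eq_zero.mp hv] at this
    exact absurd this (Finset.notMem_empty b)
  set f : V → {x : V // x ≠ v} := fun a => if h : a = v then ⟨w, hw⟩ else ⟨a, h⟩ with hf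
  have hfn : ∀ a (h : a ≠ v), f a = ⟨a, h⟩ := fun a h => dif_neg h
  apply Finset.card_le_card_of_injOn (Sym2.map f)
  · intro e he
    induction e with
    | _ a b =>
      rw [Finset.mem_coe, SimpleGraph.mem_edgeFinset, SimpleGraph.mem_edgeSet] at he
      have hav : a ≠ v := fun h => hnadj b (h ▸ he)
      have hbv : b ≠ v := fun h => hnadj a (h ▸ he.symm)
      rw [Sym2.map_pair_eq, Finset.mem_coe, SimpleGraph.mem_edgeFinset, SimpleGraph.mem_edgeSet,
        hfn a hav, hfn b hbv]
      exact he
  · intro e1 h1 e2 h2 heq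
    rw [Finset.mem_coe, SimpleGraph.mem_edgeFinset] at h1 h2
    induction e1 with
    | _ a b =>
      induction e2 with
      | _ c d =>
        have hab : G.Adj a b := h1
        have hcd : G.Adj c d := h2
        have hav : a ≠ v := fun h => hnadj b (h ▸ hab)
        have hbv : b ≠ v := fun h => hnadj a (h ▸ hab.symm)
        have hcv : c ≠ v := fun h => hnadj d (h ▸ hcd)
        have hdv : d ≠ v := fun h => hnadj c (h ▸ hcd.symm)
        rw [Sym2.map_pair_eq, Sym2.map_pair_eq, hfn a hav, hfn b hbv, hfn c hcv,
          hfn d hdv, Sym2.eq_iff] at heq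
        rw [Sym2.eq_iff]
        rcases heq with ⟨h1, h2⟩ | ⟨h1, h2⟩
        · left
          exact ⟨congrArg Subtype.val h1, congrArg Subtype.val h2⟩
        · right
          exact ⟨congrArg Subtype.val h1, congrArg Subtype.val h2⟩
end count

lemma K4_of_clique {V : Type*} {G : SimpleGraph V} {v p q r : V}
    (h1 : G.Adj v p) (h2 : G.Adj v q) (h3 : G.Adj v r)
    (h4 : G.Adj p q) (h5 : G.Adj p r) (h6 : G.Adj q r) :
    HasMinor G (completeGraph (Fin 4)) := by
  set f : Fin 4 → V := fun i => if i = 0 then v else if i = 1 then p else if i = 2 then q else r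
    with hf
  have hf0 : f 0 = v := rfl
  have hf1 : f 1 = p := rfl
  have hf2 : f 2 = q := rfl
  have hf3 : f 3 = r := rfl
  have hadj : ∀ a b : Fin 4, a ≠ b → G.Adj (f a) (f b) := by
    intro a b hab
    fin_cases a <;> fin_cases b <;>
      simp only [show (⟨0,by omega⟩ : Fin 4) = 0 from rfl, show (⟨1,by omega⟩ : Fin 4) = 1 from rfl,
        show (⟨2,by omega⟩ : Fin 4) = 2 from rfl, show (⟨3,by omega⟩ : Fin 4) = 3 from rfl,
        hf0, hf1, hf2, hf3] <;>
      first
      | exact absurd rfl hab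
      | exact h1 | exact h2 | exact h3 | exact h4 | exact h5 | exact h6
      | exact h1.symm | exact h2.symm | exact h3.symm
      | exact h4.symm | exact h5.symm | exact h6.symm
  refine minor_of_hom f ?_ ?_
  · intro a b h
    by_contra hne
    exact (hadj a b hne).ne h
  · intro a b hab
    exact hadj a b hab

section core
universe u

theorem core_bound : ∀ n : ℕ, ∀ (V : Type u) [Fintype V] [DecidableEq V],
    Fintype.card V = n →
    ∀ m : ℕ, ∀ (G : SimpleGraph V) [DecidableRel G.Adj], G.edgeFinset.card = m →
    ¬ HasMinor G (completeGraph (Fin 4)) → G.edgeFinset.card ≤ 2 * n - 3 := by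
  intro n
  induction n using Nat.strong_induction_on with
  | _ n ihn =>
  intro V _ _ hcard m
  induction m using Nat.strong_induction_on with
  | _ m ihm =>
  intro G _ hm hK4
  classical
  by_contra hcon
  push_neg at hcon
  have hsmall : ∀ k : ℕ, k ≤ 3 → k.choose 2 ≤ 2*k - 3 := by
    intro k hk; interval_cases k <;> decide
  have hchoose := G.card_edgeFinset_le_card_choose_two
  rw [hcard] at hchoose
  have hn4 : 4 ≤ n := by
    by_contra h
    exact absurd (hchoose.trans (hsmall n (by omega))) (by omega)
  have he_ge : 2*n - 2 ≤ G.edgeFinset.card := by omega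
  rcases eq_or_lt_of_le he_ge with heq | hlt
  swap
  · -- too many edges: delete one
    obtain ⟨e₀, he₀⟩ : ∃ e₀, e₀ ∈ G.edgeFinset :=
      Finset.Nonempty.exists_mem (Finset.card_pos.mp (by omega))
    set G' := G.deleteEdges {e₀} with hG'
    have hle : G' ≤ G := SimpleGraph.deleteEdges_le _
    have hmin : ¬ HasMinor G' (completeGraph (Fin 4)) := fun h => hK4 (minor_mono hle h)
    have hE : G'.edgeFinset = G.edgeFinset \ {e₀} := by
      ext e; simp [hG']
    have hcard' : G'.edgeFinset.card = m - 1 := by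
      rw [hE, Finset.card_sdiff_of_subset (Finset.singleton_subset_iff.mpr he₀), hm,
        Finset.card_singleton]
    have := ihm (m-1) (by omega) G' hcard' hmin
    omega
  · -- e = 2n - 2 exactly: find low degree vertex
    have hsum := G.sum_degrees_eq_twice_card_edges
    have hne : Nonempty V := by rw [← Fintype.card_pos_iff]; omega
    obtain ⟨v, hv⟩ : ∃ v : V, G.degree v < 4 := by
      by_contra h
      push_neg at h
      have h4 : (Finset.univ : Finset V).sum (fun _ => 4) ≤ ∑ w, G.degree w :=
        Finset.sum_le_sum (fun i _ => h i)
      rw [hsum, Finset.sum_const, smul_eq_mul, Finset.card_univ, hcard] at h4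
      omega
    have hsub : Fintype.card {x : V // x ≠ v} = n - 1 := by
      have h1 := Fintype.card_subtype_compl (fun x : V => x = v)
      have h2 : Fintype.card {x : V // x = v} = 1 := Fintype.card_subtype_eq v
      have h3 : Fintype.card {x : V // ¬ x = v} = Fintype.card {x : V // x ≠ v} := rfl
      omega
    by_cases hv0 : G.degree v = 0
    · obtain ⟨w, hw⟩ : ∃ w : V, w ≠ v := by
        have : 1 < Fintype.card V := by omega
        exact Fintype.exists_ne_of_one_lt_card this v
      have h1 := isolated_edges_le (G := G) hv0 w hw

      have h2 := ihn (n-1) (by omega) {x : V // x ≠ v} hsub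
        ((G.induce {x : V | x ≠ v}).edgeFinset.card) (G.induce {x : V | x ≠ v}) rfl
        (fun h => hK4 (minor_induce h))
      have h12 := h1.trans h2
      omega
    · by_cases hgood : ∃ u ∈ G.neighborFinset v,
          (G.neighborFinset u ∩ G.neighborFinset v).card ≤ 1
      · obtain ⟨u, huN, hucom⟩ := hgood
        have huv : G.Adj u v := ((SimpleGraph.mem_neighborFinset _ _ _).mp huN).symm
        have h1 := contract_card_edges huv
        have h2 := ihn (n-1) (by omega) {x : V // x ≠ v} hsub
          ((contract G u v).edgeFinset.card) (contract G u v) rfl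
          (fun h => hK4 (minor_contract huv h))
        omega
      · push_neg at hgood
        set Nv := G.neighborFinset v with hNv
        have herase : ∀ u ∈ Nv, G.neighborFinset u ∩ Nv ⊆ Nv.erase u := by
          intro u hu x hx
          rw [Finset.mem_inter] at hx
          refine Finset.mem_erase.mpr ⟨?_, hx.2⟩
          intro hxu
          exact G.loopless.irrefl u (by
            have := (SimpleGraph.mem_neighborFinset _ _ _).mp hx.1
            rwa [hxu] at this)
        have hdeg3 : Nv.card = 3 := by
          obtain ⟨u, hu⟩ : ∃ u, u ∈ Nv := by
            apply Finset.Nonempty.exists_mem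
            rw [← Finset.card_pos]
            have : G.degree v = Nv.card := rfl
            omega
          have h2 := hgood u hu
          have h3 := Finset.card_le_card (herase u hu)
          rw [Finset.card_erase_of_mem hu] at h3
          have : G.degree v = Nv.card := rfl
          omega
        obtain ⟨p, q, r, hpq, hpr, hqr, hNv3⟩ := Finset.card_eq_three.mp hdeg3
        have hsubadj : ∀ u ∈ Nv, Nv.erase u ⊆ G.neighborFinset u := by
          intro u hu
          have h1 := herase u hu
          have h2 := hgood u hu
          have h4 : G.neighborFinset u ∩ Nv = Nv.erase u := by
            apply Finset.eq_of_subset_of_card_le h1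
            rw [Finset.card_erase_of_mem hu]
            have : G.degree v = Nv.card := rfl
            omega
          rw [← h4]
          exact Finset.inter_subset_left
        have hp : p ∈ Nv := by rw [hNv3]; simp
        have hq : q ∈ Nv := by rw [hNv3]; simp
        have hr : r ∈ Nv := by rw [hNv3]; simp
        have hAvp : G.Adj v p := (SimpleGraph.mem_neighborFinset _ _ _).mp hp
        have hAvq : G.Adj v q := (SimpleGraph.mem_neighborFinset _ _ _).mp hq
        have hAvr : G.Adj v r := (SimpleGraph.mem_neighborFinset _ _ _).mp hr
        have hApq : G.Adj p q := by
          have : q ∈ G.neighborFinset p := hsubadj p hp (Finset.mem_erase.mpr ⟨Ne.symm hpq, hq⟩)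
          exact (SimpleGraph.mem_neighborFinset _ _ _).mp this
        have hApr : G.Adj p r := by
          have : r ∈ G.neighborFinset p := hsubadj p hp (Finset.mem_erase.mpr ⟨Ne.symm hpr, hr⟩)
          exact (SimpleGraph.mem_neighborFinset _ _ _).mp this
        have hAqr : G.Adj q r := by
          have : r ∈ G.neighborFinset q := hsubadj q hq (Finset.mem_erase.mpr ⟨Ne.symm hqr, hr⟩)
          exact (SimpleGraph.mem_neighborFinset _ _ _).mp this
        exact hK4 (K4_of_clique hAvp hAvq hAvr hApq hApr hAqr)
end core

lemma K23_of_config {V : Type*} {G : SimpleGraph V} {a b v1 v2 v3 : V}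
    (hab : a ≠ b) (h12 : v1 ≠ v2) (h13 : v1 ≠ v3) (h23 : v2 ≠ v3)
    (ha1 : G.Adj v1 a) (hb1 : G.Adj v1 b) (ha2 : G.Adj v2 a) (hb2 : G.Adj v2 b)
    (ha3 : G.Adj v3 a) (hb3 : G.Adj v3 b) :
    HasMinor G (completeBipartiteGraph (Fin 2) (Fin 3)) := by
  set lf : Fin 2 → V := fun i => if i.val = 0 then a else b with hlf
  set rf : Fin 3 → V := fun j => if j.val = 0 then v1 else if j.val = 1 then v2 else v3 with hrf
  have hlmem : ∀ i, lf i = a ∨ lf i = b := by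
    intro i; by_cases h : i.val = 0 <;> simp at h <;> simp [hlf, h]
  have hrmem : ∀ j, rf j = v1 ∨ rf j = v2 ∨ rf j = v3 := by
    intro j
    by_cases h : j.val = 0
    · left; simp at h; simp [hrf, h]
    · by_cases h1 : j.val = 1
      · right; left; simp at h h1; simp [hrf, h, h1]
      · right; right; simp at h h1; simp [hrf, h, h1]
  have hadjlr : ∀ i j, G.Adj (lf i) (rf j) := by
    intro i j
    rcases hlmem i with h | h <;> rcases hrmem j with h' | h' | h' <;> rw [h, h'] <;>
      first
      | exact ha1.symm | exact hb1.symm | exact ha2.symm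
      | exact hb2.symm | exact ha3.symm | exact hb3.symm
  have hlinj : Function.Injective lf := by
    intro i i' h
    by_cases h0 : i.val = 0 <;> by_cases h0' : i'.val = 0
    · exact Fin.ext (by omega)
    · rw [hlf] at h; simp [h0, h0'] at h; exact absurd h hab
    · rw [hlf] at h; simp [h0, h0'] at h; exact absurd h.symm hab
    · exact Fin.ext (by omega)
  have hrinj : Function.Injective rf := by
    intro j j' h
    have hj : j.val = 0 ∨ j.val = 1 ∨ j.val = 2 := by omega
    have hj' : j'.val = 0 ∨ j'.val = 1 ∨ j'.val = 2 := by omega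
    rcases hj with e | e | e <;> rcases hj' with e' | e' | e' <;>
      first
      | exact Fin.ext (by omega)
      | (exfalso
         simp only [hrf, e, e'] at h
         norm_num at h
         first
         | exact h12 h | exact h13 h | exact h23 h
         | exact h12 h.symm | exact h13 h.symm | exact h23 h.symm)
  have hlr : ∀ i j, lf i ≠ rf j := by
    intro i j h
    exact (hadjlr i j).ne h
  refine minor_of_hom (Sum.elim lf rf) ?_ ?_
  · intro x y h
    rcases x with i | j <;> rcases y with i' | j' <;>
      simp only [Sum.elim_inl, Sum.elim_inr] at h
    · rw [hlinj h]
    · exact absurd h (hlr i j')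
    · exact absurd h.symm (hlr i' j)
    · rw [hrinj h]
  · intro x y hxy
    rcases x with i | j <;> rcases y with i' | j' <;> simp at hxy ⊢
    · exact hadjlr i j'
    · exact (hadjlr i' j).symm

section transfer
variable {V : Type*} [Fintype V] [DecidableEq V]

lemma nbhd_two {G : SimpleGraph V} [DecidableRel G.Adj] {v x y : V}
    (hdeg : G.degree v = 2) (hx : G.Adj v x) (hy : G.Adj v y) (hxy : x ≠ y) :
    ∀ z, G.Adj v z → z = x ∨ z = y := by
  have hsub : {x, y} ⊆ G.neighborFinset v := by
    intro z hz
    rcases Finset.mem_insert.mp hz with rfl | hz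
    · exact (SimpleGraph.mem_neighborFinset _ _ _).mpr hx
    · rw [Finset.mem_singleton] at hz
      subst hz
      exact (SimpleGraph.mem_neighborFinset _ _ _).mpr hy
  have hcard : ({x, y} : Finset V).card = 2 := Finset.card_pair hxy
  have heq : {x, y} = G.neighborFinset v := by
    apply Finset.eq_of_subset_of_card_le hsub
    rw [hcard]
    exact le_of_eq hdeg
  intro z hz
  have : z ∈ ({x, y} : Finset V) := by
    rw [heq]
    exact (SimpleGraph.mem_neighborFinset _ _ _).mpr hz
  rcases Finset.mem_insert.mp this with h | h
  · exact Or.inl h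
  · exact Or.inr (Finset.mem_singleton.mp h)

lemma reach_first_step {W : Type*} {A : SimpleGraph W} {a b : W} (h : A.Reachable a b)
    (hne : a ≠ b) : ∃ c, A.Adj a c := by
  obtain ⟨w⟩ := h
  cases w with
  | nil => exact absurd rfl hne
  | cons h _ => exact ⟨_, h⟩

lemma transfer_K4 {G : SimpleGraph V} [DecidableRel G.Adj] (S : Finset V)
    (H : SimpleGraph V)
    (hH : ∀ x y, H.Adj x y → x ∈ S ∧ y ∈ S ∧
      ∃ v, v ∉ S ∧ G.degree v = 2 ∧ G.Adj v x ∧ G.Adj v y)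
    (hm : HasMinor H (completeGraph (Fin 4))) :
    HasMinor G (completeGraph (Fin 4)) := by
  classical
  obtain ⟨B, hne, hconn, hdisj, hedge⟩ := hm
  have hviso : ∀ v, v ∉ S → ∀ w, ¬ H.Adj v w := fun v hv w h => hv (hH v w h).1
  have hnotB : ∀ v, v ∉ S → ∀ k, v ∉ B k := by
    intro v hv k hvB
    have hkl : ∃ l : Fin 4, l ≠ k := by
      by_cases h : k = 0
      · exact ⟨1, by simp [h]⟩
      · exact ⟨0, fun h' => h h'.symm⟩
    obtain ⟨l, hl⟩ := hkl
    obtain ⟨x, hx, y, hy, hxy⟩ := hedge k l (by exact hl.symm)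
    have hxS : x ∈ S := (hH x y hxy).1
    have hxv : v ≠ x := fun h => hv (h ▸ hxS)
    have := (hconn k).preconnected ⟨v, hvB⟩ ⟨x, hx⟩
    obtain ⟨c, hc⟩ := reach_first_step this (fun h => hxv (congrArg Subtype.val h))
    exact hviso v hv c.1 hc
  -- minimal index assignment
  set P : V → Fin 4 → Prop := fun v i => ∃ x ∈ B i, G.Adj v x with hP
  set mid : Fin 4 → Set V := fun i =>
    {v | v ∉ S ∧ G.degree v = 2 ∧ (∀ k, v ∉ B k) ∧ P v i ∧ ∀ j, P v j → i ≤ j} with hmid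
  set χ : Fin 4 → Set V := fun i => B i ∪ mid i with hχ
  have hmin_exists : ∀ v i, v ∉ S → G.degree v = 2 → (∀ k, v ∉ B k) → P v i →
      ∃ i0, v ∈ mid i0 ∧ P v i0 := by
    intro v i hv hdeg hnB hPi
    set F := Finset.univ.filter (fun j => P v j) with hF
    have hFne : F.Nonempty := ⟨i, by simp [hF, hPi]⟩
    have hmm : P v (F.min' hFne) := (Finset.mem_filter.mp (F.min'_mem hFne)).2
    refine ⟨F.min' hFne, ⟨hv, hdeg, hnB, hmm, ?_⟩, hmm⟩
    intro j hj
    exact F.min'_le j (by simp [hF, hj])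
  -- witness of an H-edge with both ends in relevant sets lands in mid
  have hwit : ∀ x y (i j : Fin 4), H.Adj x y → x ∈ B i → y ∈ B j →
      ∃ v, v ∉ S ∧ G.Adj v x ∧ G.Adj v y ∧ ((v ∈ mid i) ∨ (v ∈ mid j)) := by
    intro x y i j hxy hxB hyB
    obtain ⟨hxS, hyS, v, hvS, hdeg, hvx, hvy⟩ := hH x y hxy
    have hnB := hnotB v hvS
    have hnb := nbhd_two hdeg hvx hvy hxy.ne
    have hPrange : ∀ k, P v k → k = i ∨ k = j := by
      intro k ⟨z, hzB, hvz⟩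
      rcases hnb z hvz with rfl | rfl
      · left
        by_contra hki
        exact Set.disjoint_left.mp (hdisj hki) hzB hxB
      · right
        by_contra hkj
        exact Set.disjoint_left.mp (hdisj hkj) hzB hyB
    obtain ⟨i0, hi0mid, hi0P⟩ := hmin_exists v i hvS hdeg hnB ⟨x, hxB, hvx⟩
    rcases hPrange i0 hi0P with rfl | rfl
    · exact ⟨v, hvS, hvx, hvy, Or.inl hi0mid⟩
    · exact ⟨v, hvS, hvx, hvy, Or.inr hi0mid⟩
  refine ⟨χ, ?_, ?_, ?_, ?_⟩
  · intro i
    obtain ⟨x, hx⟩ := hne i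
    exact ⟨x, Or.inl hx⟩
  · intro i
    have hBne : Nonempty (χ i) := by
      obtain ⟨x, hx⟩ := hne i
      exact ⟨⟨x, Or.inl hx⟩⟩
    constructor
    have hbase : ∀ x y : B i, (G.induce (χ i)).Reachable
        ⟨x.1, Or.inl x.2⟩ ⟨y.1, Or.inl y.2⟩ := by
      intro x y
      refine reach_transfer (fun z : B i => (⟨z.1, Or.inl z.2⟩ : χ i)) ?_ x y
        ((hconn i).preconnected x y)
      intro x y hxy
      have hxy' : H.Adj x.1 y.1 := hxy
      obtain ⟨v, hvS, hvx, hvy, hvmid⟩ := hwit x.1 y.1 i i hxy' x.2 y.2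
      have hvmid' : v ∈ mid i := by rcases hvmid with h | h <;> exact h
      have h1 : (G.induce (χ i)).Adj ⟨x.1, Or.inl x.2⟩ ⟨v, Or.inr hvmid'⟩ := hvx.symm
      have h2 : (G.induce (χ i)).Adj ⟨v, Or.inr hvmid'⟩ ⟨y.1, Or.inl y.2⟩ := hvy
      exact h1.reachable.trans h2.reachable
    have step : ∀ z : χ i, ∃ x : B i, (G.induce (χ i)).Reachable z ⟨x.1, Or.inl x.2⟩ := by
      rintro ⟨z, hz | hz⟩
      · exact ⟨⟨z, hz⟩, Reachable.refl _⟩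
      · obtain ⟨x, hxB, hzx⟩ := hz.2.2.2.1
        refine ⟨⟨x, hxB⟩, ?_⟩
        have : (G.induce (χ i)).Adj ⟨z, Or.inr hz⟩ ⟨x, Or.inl hxB⟩ := hzx
        exact this.reachable
    intro x y
    obtain ⟨x', hx'⟩ := step x
    obtain ⟨y', hy'⟩ := step y
    exact hx'.trans ((hbase x' y').trans hy'.symm)
  · intro i j hij
    rw [Set.disjoint_left]
    rintro z (hzB | hzm) (hzB' | hzm')
    · exact Set.disjoint_left.mp (hdisj hij) hzB hzB'
    · exact hzm'.2.2.1 i hzB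
    · exact hzm.2.2.1 j hzB'
    · exact hij (le_antisymm (hzm.2.2.2.2 j hzm'.2.2.2.1) (hzm'.2.2.2.2 i hzm.2.2.2.1))
  · intro i j hij
    obtain ⟨x, hx, y, hy, hxy⟩ := hedge i j hij
    obtain ⟨v, hvS, hvx, hvy, hvmid⟩ := hwit x y i j hxy hx hy
    rcases hvmid with h | h
    · exact ⟨v, Or.inr h, y, Or.inl hy, hvy⟩
    · exact ⟨x, Or.inl hx, v, Or.inr h, hvx.symm⟩
end transfer

lemma card_edgeFinset_indep {W : Type*} {G : SimpleGraph W} (i1 i2 : Fintype G.edgeSet) :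
    (@SimpleGraph.edgeFinset _ G i1).card = (@SimpleGraph.edgeFinset _ G i2).card := by
  rw [Subsingleton.elim i1 i2]

section assemble
variable {V : Type*} [Fintype V] [DecidableEq V]

lemma edges_le_induce (H : SimpleGraph V) [DecidableRel H.Adj] (A : Set V)
    [DecidablePred (· ∈ A)] (hA : ∀ x y, H.Adj x y → x ∈ A ∧ y ∈ A) :
    H.edgeFinset.card ≤ (H.induce A).edgeFinset.card := by
  classical
  rcases Finset.eq_empty_or_nonempty H.edgeFinset with h | h
  · simp [h]
  obtain ⟨e0, he0⟩ := h
  have hA0 : ∃ a0, a0 ∈ A := by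
    induction e0 with
    | _ x y =>
      rw [SimpleGraph.mem_edgeFinset, SimpleGraph.mem_edgeSet] at he0
      exact ⟨x, (hA x y he0).1⟩
  obtain ⟨a0, ha0⟩ := hA0
  set f : V → A := fun x => if h : x ∈ A then ⟨x, h⟩ else ⟨a0, ha0⟩ with hf
  have hfn : ∀ x (h : x ∈ A), f x = ⟨x, h⟩ := fun x h => dif_pos h
  apply Finset.card_le_card_of_injOn (Sym2.map f)
  · intro e he
    induction e with
    | _ x y =>
      rw [Finset.mem_coe, SimpleGraph.mem_edgeFinset, SimpleGraph.mem_edgeSet] at he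
      obtain ⟨hx, hy⟩ := hA x y he
      rw [Sym2.map_pair_eq, Finset.mem_coe, SimpleGraph.mem_edgeFinset, SimpleGraph.mem_edgeSet,
        hfn x hx, hfn y hy]
      exact he
  · intro e1 h1 e2 h2 heq
    rw [Finset.mem_coe, SimpleGraph.mem_edgeFinset] at h1 h2
    induction e1 with
    | _ x y =>
      induction e2 with
      | _ z w =>
        have hxy : H.Adj x y := h1
        have hzw : H.Adj z w := h2
        obtain ⟨hx, hy⟩ := hA x y hxy
        obtain ⟨hz, hw⟩ := hA z w hzw
        rw [Sym2.map_pair_eq, Sym2.map_pair_eq, hfn x hx, hfn y hy, hfn z hz,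
          hfn w hw, Sym2.eq_iff] at heq
        rw [Sym2.eq_iff]
        rcases heq with ⟨e1, e2⟩ | ⟨e1, e2⟩
        · exact Or.inl ⟨congrArg Subtype.val e1, congrArg Subtype.val e2⟩
        · exact Or.inr ⟨congrArg Subtype.val e1, congrArg Subtype.val e2⟩

set_option maxHeartbeats 1000000 in
theorem stmt15' (G : SimpleGraph V)
    [DecidableRel G.Adj]
    (hK4 : ¬ HasMinor G (completeGraph (Fin 4)))
    (hK23 : ¬ HasMinor G (completeBipartiteGraph (Fin 2) (Fin 3)))
    (S : Finset V) (hS : ∀ u v : V, G.Adj u v → u ∈ S ∨ v ∈ S)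
    (D : Finset V)
    (hD : D = Finset.univ.filter fun v => v ∉ S ∧ G.degree v = 2)
    (hScard : 2 ≤ S.card) :
    D.card ≤ 4 * S.card - 6 := by
  classical
  set H : SimpleGraph V := {
    Adj := fun x y => x ≠ y ∧ x ∈ S ∧ y ∈ S ∧
      ∃ v, v ∉ S ∧ G.degree v = 2 ∧ G.Adj v x ∧ G.Adj v y
    symm := by
      constructor
      rintro x y ⟨h1, h2, h3, v, h4, h5, h6, h7⟩
      exact ⟨h1.symm, h3, h2, v, h4, h5, h7, h6⟩
    loopless := ⟨fun x h => h.1 rfl⟩ } with hH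
  letI : DecidableRel H.Adj := fun x y => inferInstanceAs (Decidable (x ≠ y ∧ x ∈ S ∧ y ∈ S ∧
      ∃ v, v ∉ S ∧ G.degree v = 2 ∧ G.Adj v x ∧ G.Adj v y))
  have hHadj : ∀ x y, H.Adj x y ↔ (x ≠ y ∧ x ∈ S ∧ y ∈ S ∧
      ∃ v, v ∉ S ∧ G.degree v = 2 ∧ G.Adj v x ∧ G.Adj v y) := fun x y => Iff.rfl
  have hHK4 : ¬ HasMinor H (completeGraph (Fin 4)) := by
    intro h
    exact hK4 (transfer_K4 S H (fun x y hxy => ⟨hxy.2.1, hxy.2.2.1, hxy.2.2.2⟩) h)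
  set A : Set V := {x : V | x ∈ S} with hA
  letI : DecidablePred (· ∈ A) := fun x => decidable_of_iff (x ∈ S) Iff.rfl
  letI : DecidableRel (H.induce A).Adj := fun a b => inferInstanceAs (Decidable (H.Adj a.1 b.1))
  have hHSK4 : ¬ HasMinor (H.induce A) (completeGraph (Fin 4)) :=
    fun h => hHK4 (minor_induce h)
  have hcardA : Fintype.card A = S.card := by
    simp [hA]
  have hcore := core_bound (Fintype.card A) A rfl
    ((H.induce A).edgeFinset.card) (H.induce A) rfl hHSK4
  rw [hcardA] at hcore
  have hHle := edges_le_induce H A (fun x y hxy => ⟨hxy.2.1, hxy.2.2.1⟩)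
  -- the pair map
  have hpair : ∀ v ∈ D, ∃ p : Sym2 V, ∃ a b : V, p = s(a,b) ∧ a ≠ b ∧
      G.Adj v a ∧ G.Adj v b := by
    intro v hv
    rw [hD, Finset.mem_filter] at hv
    obtain ⟨-, hvS, hdeg⟩ := hv
    obtain ⟨a, b, hne, hNv⟩ := Finset.card_eq_two.mp hdeg
    have ha : G.Adj v a := by
      have : a ∈ G.neighborFinset v := by rw [hNv]; simp
      exact (SimpleGraph.mem_neighborFinset _ _ _).mp this
    have hb : G.Adj v b := by
      have : b ∈ G.neighborFinset v := by rw [hNv]; simp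
      exact (SimpleGraph.mem_neighborFinset _ _ _).mp this
    exact ⟨s(a,b), a, b, rfl, hne, ha, hb⟩
  set f : V → Sym2 V := fun v => if h : v ∈ D then (hpair v h).choose else s(v,v) with hf
  have hfprop : ∀ v (h : v ∈ D), ∃ a b : V, f v = s(a,b) ∧ a ≠ b ∧
      G.Adj v a ∧ G.Adj v b := by
    intro v h
    rw [hf]
    simp only [dif_pos h]
    exact (hpair v h).choose_spec
  have hDS : ∀ v ∈ D, v ∉ S := by
    intro v hv; rw [hD, Finset.mem_filter] at hv; exact hv.2.1
  have hDdeg : ∀ v ∈ D, G.degree v = 2 := by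
    intro v hv; rw [hD, Finset.mem_filter] at hv; exact hv.2.2
  -- image lands in H.edgeFinset
  have himg : D.image f ⊆ H.edgeFinset := by
    intro p hp
    rw [Finset.mem_image] at hp
    obtain ⟨v, hv, rfl⟩ := hp
    obtain ⟨a, b, hab, hne, ha, hb⟩ := hfprop v hv
    rw [hab, SimpleGraph.mem_edgeFinset, SimpleGraph.mem_edgeSet]
    have haS : a ∈ S := by
      rcases hS v a ha with h | h
      · exact absurd h (hDS v hv)
      · exact h
    have hbS : b ∈ S := by
      rcases hS v b hb with h | h
      · exact absurd h (hDS v hv)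
      · exact h
    exact ⟨hne, haS, hbS, v, hDS v hv, hDdeg v hv, ha, hb⟩
  -- fibers of f on D have size ≤ 2
  have hfib : ∀ p ∈ D.image f, (D.filter fun v => f v = p).card ≤ 2 := by
    intro p hp
    by_contra hbig
    push_neg at hbig
    obtain ⟨T, hTsub, hT3⟩ := Finset.exists_subset_card_eq (n := 3) hbig
    obtain ⟨v1, v2, v3, h12, h13, h23, hTeq⟩ := Finset.card_eq_three.mp hT3
    have hmem : ∀ w ∈ T, w ∈ D ∧ f w = p := by
      intro w hw
      have := hTsub hw
      rw [Finset.mem_filter] at this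
      exact this
    have h1 := hmem v1 (by rw [hTeq]; simp)
    have h2 := hmem v2 (by rw [hTeq]; simp)
    have h3 := hmem v3 (by rw [hTeq]; simp)
    obtain ⟨a, b, hab1, hne, ha1, hb1⟩ := hfprop v1 h1.1
    have hpeq : p = s(a,b) := by rw [← h1.2, hab1]
    have hadj : ∀ w, w ∈ D → f w = p → G.Adj w a ∧ G.Adj w b := by
      intro w hw hfw
      obtain ⟨c, d, hcd, hnecd, hc, hd⟩ := hfprop w hw
      rw [hcd, hpeq, Sym2.eq_iff] at hfw
      rcases hfw with ⟨rfl, rfl⟩ | ⟨rfl, rfl⟩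
      · exact ⟨hc, hd⟩
      · exact ⟨hd, hc⟩
    obtain ⟨ha2, hb2⟩ := hadj v2 h2.1 h2.2
    obtain ⟨ha3, hb3⟩ := hadj v3 h3.1 h3.2
    exact hK23 (K23_of_config hne h12 h13 h23 ha1 hb1 ha2 hb2 ha3 hb3)
  have hcount := Finset.card_le_mul_card_image (f := f) D 2 hfib
  have himgcard := Finset.card_le_card himg
  have hchain := himgcard.trans ((card_edgeFinset_indep _ _).le.trans
    (hHle.trans ((card_edgeFinset_indep _ _).le.trans hcore)))
  omega
end assemble

/-- In an outerplanar graph with vertex cover `S` with `|S| ≥ 2`, the set `D` of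
degree-2 vertices outside `S` satisfies `|D| ≤ 4|S| - 6`. -/
theorem stmt15 {V : Type*} [Fintype V] [DecidableEq V] (G : SimpleGraph V)
    [DecidableRel G.Adj] (hG : Outerplanar G)
    (S : Finset V) (hS : ∀ u v : V, G.Adj u v → u ∈ S ∨ v ∈ S)
    (D : Finset V)
    (hD : D = Finset.univ.filter fun v => v ∉ S ∧ G.degree v = 2)
    (hScard : 2 ≤ S.card) :
    D.card ≤ 4 * S.card - 6 := by
  obtain ⟨hK4, hK23⟩ := hG
  exact stmt15' G hK4 hK23 S hS D hD hScard
end
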